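/- arXiv:1705.03066 — 8 statements merged into one kernel-verified Lean document; each statement's English description precedes it below -/
import Mathlib

section
/- Let R be a commutative ring and a : ℤ → R a function with a(−1) = 1 and a(k) = 0 for all k < −1. Then for every integer m ≥ 1, the alternating sum ∑_{s=0}^{m} (−1)^s · a(m−1−s) · D_s equals 0, where D_s is the determinant of the s × s matrix with (i,j) entry a(j−i). (Lemma 2.2 of the paper.) -/
open Matrix Finset

lemma minor_det_aux {R : Type*} [CommRing R] (a : ℤ → R)
    (h1 : a (-1) = 1) (h2 : ∀ k : ℤ, k < -1 → a k = 0)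
    (m : ℕ) (i : Fin (m + 1)) :
    Matrix.det (Matrix.of fun r c : Fin m => a ((c : ℤ) - ((i.succAbove r : Fin (m+1)) : ℤ))) =
    Matrix.det (Matrix.of fun r c : Fin (i : ℕ) => a ((c : ℤ) - (r : ℤ))) := by
  set k := (i : ℕ) with hkdef
  have hk : k ≤ m := Nat.lt_succ_iff.mp i.isLt
  set e : Fin k ⊕ Fin (m - k) ≃ Fin m :=
    finSumFinEquiv.trans (finCongr (by omega)) with hedef
  rw [← Matrix.det_submatrix_equiv_self e]
  have he : ∀ p : Fin k, ((e (Sum.inl p) : Fin m) : ℕ) = p := by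
    intro p; simp [hedef]
  have he' : ∀ q : Fin (m - k), ((e (Sum.inr q) : Fin m) : ℕ) = k + q := by
    intro q; simp [hedef]
  have hsucc : ∀ x : Fin m, ((i.succAbove x : Fin (m+1)) : ℕ)
      = if (x : ℕ) < k then (x : ℕ) else (x : ℕ) + 1 := by
    intro x
    rw [Fin.succAbove]
    split_ifs with h h' h'
    · rfl
    · exact absurd (by simpa [Fin.lt_def] using h) h'
    · exact absurd (by simpa [Fin.lt_def] using h') h
    · rfl
  have hsuccL : ∀ p : Fin k, ((i.succAbove (e (Sum.inl p)) : Fin (m+1)) : ℕ) = (p : ℕ) := by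
    intro p; rw [hsucc, he, if_pos p.isLt]
  have hsuccR : ∀ q : Fin (m - k), ((i.succAbove (e (Sum.inr q)) : Fin (m+1)) : ℕ)
      = k + (q : ℕ) + 1 := by
    intro q; rw [hsucc, he', if_neg (by omega)]
  have hblock : (Matrix.of fun r c : Fin m =>
        a ((c : ℤ) - ((i.succAbove r : Fin (m+1)) : ℤ))).submatrix e e
      = Matrix.fromBlocks (Matrix.of fun r c : Fin k => a ((c : ℤ) - (r : ℤ)))
          (Matrix.of fun (r : Fin k) (c : Fin (m - k)) => a ((k : ℤ) + (c : ℤ) - (r : ℤ))) 0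
          (Matrix.of fun r c : Fin (m - k) => a ((c : ℤ) - (r : ℤ) - 1)) := by
    ext u v
    rcases u with p | q <;> rcases v with p' | q' <;>
      simp only [Matrix.submatrix_apply, Matrix.of_apply, Matrix.fromBlocks_apply₁₁,
        Matrix.fromBlocks_apply₁₂, Matrix.fromBlocks_apply₂₁, Matrix.fromBlocks_apply₂₂,
        Matrix.zero_apply]
    · rw [he, hsuccL]
    · rw [he', hsuccL]
      have hc : (((k + (q' : ℕ)) : ℕ) : ℤ) = (k : ℤ) + ((q' : ℕ) : ℤ) := by push_cast; ring
      rw [hc]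
    · rw [he, hsuccR]
      apply h2
      have := p'.isLt
      push_cast
      omega
    · rw [he', hsuccR]
      congr 1
      push_cast
      ring
  rw [hblock, Matrix.det_fromBlocks_zero₂₁]
  have htri : (Matrix.of fun r c : Fin (m - k) =>
      a ((c : ℤ) - (r : ℤ) - 1)).BlockTriangular id := by
    intro r c h
    simp only [Matrix.of_apply]
    apply h2
    have : (c : ℕ) < (r : ℕ) := h
    push_cast
    omega
  rw [Matrix.det_of_upperTriangular htri]
  have : ∀ r : Fin (m - k), (Matrix.of fun r c : Fin (m - k) =>
      a ((c : ℤ) - (r : ℤ) - 1)) r r = 1 := by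
    intro r; simp [h1]
  simp [this]

/-- Lemma 2.2: if `a (-1) = 1` and `a k = 0` for `k < -1`, then for `m ≥ 1`,
`∑_{s=0}^{m} (-1)^s ⬝ a (m-1-s) ⬝ det (a (j-i))_{i,j=1..s} = 0`. -/
theorem stmt0 {R : Type*} [CommRing R] (a : ℤ → R)
    (h1 : a (-1) = 1) (h2 : ∀ k : ℤ, k < -1 → a k = 0)
    (m : ℕ) (hm : 1 ≤ m) :
    ∑ s ∈ Finset.range (m + 1),
      (-1 : R) ^ s * a ((m : ℤ) - 1 - (s : ℤ)) *
        Matrix.det (Matrix.of fun i j : Fin s => a ((j : ℤ) - (i : ℤ))) = 0 := by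
  classical
  set B : Matrix (Fin (m+1)) (Fin (m+1)) R :=
    Matrix.of fun i j => a ((if (j : ℕ) = 0 then (m : ℤ) else (j : ℤ)) - 1 - (i : ℤ)) with hB
  have hdet0 : B.det = 0 := by
    apply Matrix.det_zero_of_column_eq (i := (0 : Fin (m+1))) (j := Fin.last m)
    · intro h
      have := congrArg Fin.val h
      simp at this
      omega
    · intro r
      have hm0 : m ≠ 0 := by omega
      simp [hB, Fin.last, hm0]
  have hexp := Matrix.det_succ_column_zero B
  rw [hdet0] at hexp
  rw [Finset.sum_range fun s => (-1 : R) ^ s * a ((m : ℤ) - 1 - (s : ℤ)) *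
        Matrix.det (Matrix.of fun i j : Fin s => a ((j : ℤ) - (i : ℤ)))]
  have : ∀ i : Fin (m+1),
      (-1 : R) ^ (i : ℕ) * B i 0 * (B.submatrix i.succAbove Fin.succ).det
      = (-1 : R) ^ (i : ℕ) * a ((m : ℤ) - 1 - ((i : ℕ) : ℤ)) *
        Matrix.det (Matrix.of fun r c : Fin (i : ℕ) => a ((c : ℤ) - (r : ℤ))) := by
    intro i
    have hB0 : B i 0 = a ((m : ℤ) - 1 - ((i : ℕ) : ℤ)) := by simp [hB]
    have hsub : (B.submatrix i.succAbove Fin.succ)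
        = Matrix.of fun r c : Fin m => a ((c : ℤ) - ((i.succAbove r : Fin (m+1)) : ℤ)) := by
      ext r c
      simp [hB, Fin.val_succ]
    rw [hB0, hsub, minor_det_aux a h1 h2 m i]
  calc ∑ i : Fin (m+1), (-1 : R) ^ (i : ℕ) * a ((m : ℤ) - 1 - ((i : ℕ) : ℤ)) *
        Matrix.det (Matrix.of fun r c : Fin (i : ℕ) => a ((c : ℤ) - (r : ℤ)))
      = ∑ i : Fin (m+1), (-1 : R) ^ (i : ℕ) * B i 0 * (B.submatrix i.succAbove Fin.succ).det :=
        Finset.sum_congr rfl fun i _ => (this i).symm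
    _ = 0 := hexp.symm
end

section
/- Let R be a commutative ring, d ≥ 1 an integer, and a : ℤ → R a function with a(k) = 0 for all k < d−1 and a(d−1) = 1. With c(t) := (−1)^t times the determinant of the t × t matrix whose (i,j) entry is a(d+j−i) (and c(0) = 1), for all integers 0 ≤ i, j ≤ d−1 one has ∑_{k=j}^{d−1} c(d−1−k) · a(k+i−j) = 1 if i = j and = 0 otherwise. (The algebraic content of Lemma 2.4 of the paper: a counterclockwise bubble carrying i ordinary dots and one dual dot labelled j∨ evaluates to δ_{i,j}.) -/
open Finset Matrix

section aux
variable {R : Type*} [CommRing R] (d : ℕ) (a : ℤ → R)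

def Mm (t : ℕ) : Matrix (Fin t) (Fin t) R :=
  Matrix.of fun p q => a ((d : ℤ) + (q : ℤ) - (p : ℤ))

def Dm (t : ℕ) (m : ℤ) : Matrix (Fin t) (Fin t) R :=
  Matrix.of fun p q =>
    if (p : ℕ) = 0 then a ((d : ℤ) - 1 + m + (q : ℤ)) else a ((d : ℤ) + (q : ℤ) - (p : ℤ))

omit [CommRing R] in
lemma Dm_one (t : ℕ) : Dm d a t 1 = Mm d a t := by
  ext p q
  simp only [Dm, Mm, Matrix.of_apply]
  split_ifs with h
  · congr 1
    have : (p : ℤ) = 0 := by exact_mod_cast h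
    rw [this]; ring
  · rfl

lemma det_Dm_succ (h0 : ∀ k : ℤ, k < (d : ℤ) - 1 → a k = 0) (h1 : a ((d : ℤ) - 1) = 1)
    (n : ℕ) (m : ℤ) :
    (Dm d a (n + 2) m).det =
      a ((d : ℤ) - 1 + m) * (Mm d a (n + 1)).det - (Dm d a (n + 1) (m + 1)).det := by
  rw [Matrix.det_succ_column_zero]
  rw [Fin.sum_univ_succ, Fin.sum_univ_succ]
  have e0 : (Dm d a (n+2) m).submatrix (Fin.succAbove 0) Fin.succ = Mm d a (n+1) := by
    ext p q
    simp only [Matrix.submatrix_apply, Dm, Mm, Matrix.of_apply, Fin.succAbove_zero,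
      Fin.val_succ]
    rw [if_neg (by simp)]
    congr 1
    push_cast; ring
  have e1 : (Dm d a (n+2) m).submatrix (Fin.succAbove (Fin.succ 0)) Fin.succ
      = Dm d a (n+1) (m+1) := by
    ext p q
    simp only [Matrix.submatrix_apply]
    induction p using Fin.cases with
    | zero =>
      have hr : (Fin.succ 0 : Fin (n+2)).succAbove 0 = 0 := by
        have := Fin.succAbove_of_castSucc_lt (Fin.succ 0) (0 : Fin (n+1))
          (by simp [Fin.lt_def])
        simpa using this
      rw [hr]
      simp only [Dm, Matrix.of_apply, Fin.val_zero, Fin.val_succ, reduceIte]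
      congr 1; push_cast; ring
    | succ p =>
      have hr : (Fin.succ 0 : Fin (n+2)).succAbove p.succ = p.succ.succ := by
        rw [Fin.succAbove_of_le_castSucc]
        simp [Fin.le_def]
      rw [hr]
      simp only [Dm, Matrix.of_apply, Fin.val_succ]
      rw [if_neg (by omega), if_neg (by omega)]
      congr 1; push_cast; ring
  rw [e0, e1]
  have ez : ∀ i : Fin n, (-1 : R) ^ ((i.succ.succ : Fin (n+2)) : ℕ) *
      Dm d a (n+2) m i.succ.succ 0 *
      ((Dm d a (n+2) m).submatrix (Fin.succAbove i.succ.succ) Fin.succ).det = 0 := by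
    intro i
    have : Dm d a (n+2) m i.succ.succ 0 = 0 := by
      simp only [Dm, Matrix.of_apply, Fin.val_succ, Fin.val_zero]
      rw [if_neg (by omega)]
      apply h0
      push_cast
      omega
    rw [this]; ring
  rw [Finset.sum_congr rfl (fun i _ => ez i), Finset.sum_const_zero]
  have d00 : Dm d a (n+2) m 0 0 = a ((d:ℤ) - 1 + m) := by
    simp [Dm]
  have d10 : Dm d a (n+2) m (Fin.succ 0) 0 = 1 := by
    simp only [Dm, Matrix.of_apply, Fin.val_succ, Fin.val_zero]
    show a ((d:ℤ) + ((0:ℕ):ℤ) - ((0+1:ℕ):ℤ)) = 1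
    rw [← h1]
    congr 1
  rw [d00, d10]
  simp only [Fin.val_zero, pow_zero, one_mul, Fin.val_succ, Nat.zero_add, pow_one,
    neg_one_mul, neg_mul, one_mul, add_zero]
  ring

end aux

section aux2
variable {R : Type*} [CommRing R] (d : ℕ) (a : ℤ → R)
  (h0 : ∀ k : ℤ, k < (d : ℤ) - 1 → a k = 0) (h1 : a ((d : ℤ) - 1) = 1)

include h0 h1 in
lemma det_Dm (n : ℕ) : ∀ m : ℤ, (Dm d a (n + 1) m).det =
    ∑ s ∈ Finset.range (n + 1),
      (-1 : R) ^ s * a ((d : ℤ) - 1 + m + (s : ℤ)) * (Mm d a (n - s)).det := by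
  induction n with
  | zero =>
    intro m
    simp [Matrix.det_fin_one, Dm, Mm, Matrix.det_fin_zero]
  | succ n ih =>
    intro m
    rw [det_Dm_succ d a h0 h1 n m, ih (m + 1)]
    conv_rhs => rw [Finset.sum_range_succ']
    have hterm : ∀ s ∈ Finset.range (n + 1),
        (-1 : R) ^ (s + 1) * a ((d : ℤ) - 1 + m + ((s + 1 : ℕ) : ℤ)) * (Mm d a (n + 1 - (s + 1))).det
          = -((-1 : R) ^ s * a ((d : ℤ) - 1 + (m + 1) + (s : ℤ)) * (Mm d a (n - s)).det) := by
      intro s _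
      rw [pow_succ, show ((d : ℤ) - 1 + m + ((s + 1 : ℕ) : ℤ)) = (d : ℤ) - 1 + (m + 1) + (s : ℤ)
        by push_cast; ring, Nat.succ_sub_succ]
      ring
    rw [Finset.sum_congr rfl hterm, Finset.sum_neg_distrib]
    norm_num
    rw [Nat.sub_zero]
    ring

include h0 h1 in
lemma det_Mm_rec (n : ℕ) : (Mm d a (n + 1)).det =
    ∑ s ∈ Finset.range (n + 1), (-1 : R) ^ s * a ((d : ℤ) + (s : ℤ)) * (Mm d a (n - s)).det := by
  rw [← Dm_one, det_Dm d a h0 h1 n 1]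
  refine Finset.sum_congr rfl fun s _ => ?_
  congr 2
  ring

include h0 h1 in
lemma csum (n : ℕ) :
    ∑ u ∈ Finset.range (n + 1), ((-1 : R) ^ u * (Mm d a u).det) * a ((d : ℤ) - 1 + (n : ℤ) - (u : ℤ))
      = if n = 0 then 1 else 0 := by
  cases n with
  | zero =>
    simp [Matrix.det_fin_zero, h1]
  | succ t =>
    rw [if_neg (by omega), Finset.sum_range_succ]
    rw [show ((d : ℤ) - 1 + ((t + 1 : ℕ) : ℤ) - ((t + 1 : ℕ) : ℤ)) = (d : ℤ) - 1 by ring, h1,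
      mul_one, det_Mm_rec d a h0 h1 t, ← Finset.sum_range_reflect]
    rw [Finset.mul_sum, ← Finset.sum_add_distrib]
    refine Finset.sum_eq_zero fun s hs => ?_
    have hst : s ≤ t := by simpa using Nat.lt_succ_iff.mp (Finset.mem_range.mp hs)
    rw [show t + 1 - 1 - s = t - s from rfl]
    rw [show ((d : ℤ) - 1 + ((t + 1 : ℕ) : ℤ) - ((t - s : ℕ) : ℤ)) = (d : ℤ) + (s : ℤ) by
      push_cast [Nat.cast_sub hst]; ring]
    have hpow : (-1 : R) ^ (t + 1) * (-1 : R) ^ s = -(-1 : R) ^ (t - s) := by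
      rw [← pow_add, show t + 1 + s = (t - s) + 2 * s + 1 by omega, pow_succ, pow_add,
        pow_mul]
      norm_num
    calc ((-1 : R) ^ (t - s) * (Mm d a (t - s)).det) * a ((d : ℤ) + (s : ℤ)) +
          (-1 : R) ^ (t + 1) * ((-1 : R) ^ s * a ((d : ℤ) + (s : ℤ)) * (Mm d a (t - s)).det)
        = ((-1 : R) ^ (t - s) + (-1 : R) ^ (t + 1) * (-1 : R) ^ s) *
            (a ((d : ℤ) + (s : ℤ)) * (Mm d a (t - s)).det) := by ring
      _ = 0 := by rw [hpow]; ring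

end aux2

/-- Lemma 2.4 (algebraic content): with `a k` the value of a counterclockwise bubble with `k`
dots and `c t = (-1)^t det (a (d+j-i))_{i,j=1..t}`, for `0 ≤ i, j ≤ d-1` one has
`∑_{k=j}^{d-1} c (d-1-k) ⬝ a (k+i-j) = δ_{i,j}`. -/
theorem stmt3 {R : Type*} [CommRing R] (d : ℕ) (hd : 1 ≤ d) (a : ℤ → R)
    (h0 : ∀ k : ℤ, k < (d : ℤ) - 1 → a k = 0) (h1 : a ((d : ℤ) - 1) = 1)
    (i j : ℕ) (hi : i ≤ d - 1) (hj : j ≤ d - 1) :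
    ∑ k ∈ Finset.Icc j (d - 1),
      ((-1 : R) ^ (d - 1 - k) *
          Matrix.det (Matrix.of fun p q : Fin (d - 1 - k) => a ((d : ℤ) + (q : ℤ) - (p : ℤ)))) *
        a ((k : ℤ) + (i : ℤ) - (j : ℤ)) =
      (if i = j then 1 else 0) := by
  show ∑ k ∈ Finset.Icc j (d - 1),
      ((-1 : R) ^ (d - 1 - k) * (Mm d a (d - 1 - k)).det) * a ((k : ℤ) + (i : ℤ) - (j : ℤ))
    = (if i = j then 1 else 0)
  rcases lt_or_ge i j with hij | hij
  · rw [if_neg (by omega)]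
    refine Finset.sum_eq_zero fun k hk => ?_
    rw [Finset.mem_Icc] at hk
    rw [h0 _ (by omega), mul_zero]
  · have hsub : Finset.Icc (d - 1 - (i - j)) (d - 1) ⊆ Finset.Icc j (d - 1) :=
      Finset.Icc_subset_Icc_left (by omega)
    rw [← Finset.sum_subset hsub (fun k hk hk' => ?_)]
    · have hre : ∑ k ∈ Finset.Icc (d - 1 - (i - j)) (d - 1),
          ((-1 : R) ^ (d - 1 - k) * (Mm d a (d - 1 - k)).det) * a ((k : ℤ) + (i : ℤ) - (j : ℤ))
        = ∑ u ∈ Finset.range ((i - j) + 1),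
          ((-1 : R) ^ u * (Mm d a u).det) * a ((d : ℤ) - 1 + ((i - j : ℕ) : ℤ) - (u : ℤ)) := by
        refine Finset.sum_nbij' (fun k => d - 1 - k) (fun u => d - 1 - u)
          (fun k hk => ?_) (fun u hu => ?_) (fun k hk => ?_) (fun u hu => ?_) (fun k hk => ?_)
        · simp only [Finset.mem_Icc, Finset.mem_range] at hk ⊢; omega
        · simp only [Finset.mem_Icc, Finset.mem_range] at hu ⊢; omega
        · simp only [Finset.mem_Icc] at hk; omega
        · simp only [Finset.mem_range] at hu; omega
        · simp only [Finset.mem_Icc] at hk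
          congr 2
          omega
      rw [hre, csum d a h0 h1 (i - j)]
      rcases eq_or_ne i j with hij2 | hij2
      · rw [if_pos hij2, if_pos (by omega)]
      · rw [if_neg hij2, if_neg (by omega)]
    · simp only [Finset.mem_Icc] at hk
      simp only [Finset.mem_Icc, not_and, not_le] at hk'
      rw [h0 _ (by omega), mul_zero]
end

section
/- Let A be a ring and s, x, y ∈ A satisfy s·s = 1, x·y = y·x, and s·x = y·s − 1. Then for every integer a ≥ 0, s·x^a·s = y^a − ∑_{u+v=a−1} x^u·s·x^v − ∑_{u+v=a−1} ∑_{p+q=v−1} x^{u+p}·y^q, where the sums are over pairs of nonnegative integers with the indicated sums. (The displayed identity in the proof of Lemma 5.6 of the paper, also used in the proof of Lemma 5.11.) -/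
/-- The identity from the proof of Lemma 5.6:
`s ⬝ x^a ⬝ s = y^a - ∑_{u+v=a-1} x^u ⬝ s ⬝ x^v - ∑_{u+v=a-1} ∑_{p+q=v-1} x^{u+p} ⬝ y^q`. -/
theorem stmt6 {A : Type*} [Ring A] (s x y : A)
    (hs : s * s = 1) (hxy : x * y = y * x) (hsx : s * x = y * s - 1)
    (a : ℕ) :
    s * x ^ a * s = y ^ a
      - (∑ u ∈ Finset.range a, x ^ u * s * x ^ (a - 1 - u))
      - ∑ u ∈ Finset.range a, ∑ p ∈ Finset.range (a - 1 - u),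
          x ^ (u + p) * y ^ (a - 1 - u - 1 - p) := by
  have hc : Commute x y := hxy
  -- x * s = s * y - 1
  have hxs : x * s = s * y - 1 := by
    have h1 : s * (s * x) = x := by rw [← mul_assoc, hs, one_mul]
    calc x * s = s * (s * x) * s := by rw [h1]
      _ = s * ((y * s - 1) * s) := by rw [hsx, mul_assoc]
      _ = s * (y * (s * s) - s) := by noncomm_ring
      _ = s * y - 1 := by rw [hs, mul_one, mul_sub, hs]
  have hsy : s * y = x * s + 1 := by rw [hxs]; abel
  induction a with
  | zero => simp [hs]
  | succ a ih =>
    have key : s * x ^ (a + 1) * s = (s * x ^ a * s) * y - s * x ^ a := by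
      calc s * x ^ (a + 1) * s = s * x ^ a * (x * s) := by
            rw [pow_succ, ← mul_assoc, mul_assoc]
        _ = s * x ^ a * (s * y - 1) := by rw [hxs]
        _ = (s * x ^ a * s) * y - s * x ^ a := by noncomm_ring
    set S1 := ∑ u ∈ Finset.range a, x ^ u * s * x ^ (a - 1 - u) with hS1
    set S2 := ∑ u ∈ Finset.range a, ∑ p ∈ Finset.range (a - 1 - u),
        x ^ (u + p) * y ^ (a - 1 - u - 1 - p) with hS2
    set T1 := ∑ u ∈ Finset.range a, x ^ (u + 1) * s * x ^ (a - 1 - u) with hT1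
    set C := ∑ _u ∈ Finset.range a, x ^ (a - 1) with hC0
    have hA : S1 * y = T1 + C := by
      rw [hS1, hT1, hC0, Finset.sum_mul, ← Finset.sum_add_distrib]
      refine Finset.sum_congr rfl fun u hu => ?_
      have hu' : u < a := Finset.mem_range.mp hu
      calc x ^ u * s * x ^ (a - 1 - u) * y
          = x ^ u * (s * y) * x ^ (a - 1 - u) := by
            rw [mul_assoc (x ^ u * s), (hc.pow_left _).eq, ← mul_assoc, mul_assoc (x ^ u)]
        _ = x ^ u * (x * s + 1) * x ^ (a - 1 - u) := by rw [hsy]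
        _ = x ^ (u + 1) * s * x ^ (a - 1 - u) + x ^ u * x ^ (a - 1 - u) := by
            rw [pow_succ]; noncomm_ring
        _ = x ^ (u + 1) * s * x ^ (a - 1 - u) + x ^ (a - 1) := by
            rw [← pow_add, show u + (a - 1 - u) = a - 1 by omega]
    have hB : (∑ u ∈ Finset.range (a + 1), x ^ u * s * x ^ (a + 1 - 1 - u))
        = T1 + s * x ^ a := by
      rw [Finset.sum_range_succ', hT1]
      congr 1
      · refine Finset.sum_congr rfl fun u hu => ?_
        rw [show a + 1 - 1 - (u + 1) = a - 1 - u by omega]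
      · simp
    have hC : (∑ u ∈ Finset.range (a + 1), ∑ p ∈ Finset.range (a + 1 - 1 - u),
          x ^ (u + p) * y ^ (a + 1 - 1 - u - 1 - p)) = S2 * y + C := by
      rw [Finset.sum_range_succ]
      simp only [Nat.add_sub_cancel, Nat.sub_self, Finset.range_zero,
        Finset.sum_empty, add_zero]
      rw [hS2, hC0, Finset.sum_mul, ← Finset.sum_add_distrib]
      refine Finset.sum_congr rfl fun u hu => ?_
      have hu' : u < a := Finset.mem_range.mp hu
      rw [show a - u = (a - 1 - u) + 1 by omega, Finset.sum_range_succ,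
        Finset.sum_mul]
      congr 1
      · refine Finset.sum_congr rfl fun p hp => ?_
        have hp' : p < a - 1 - u := Finset.mem_range.mp hp
        rw [mul_assoc, ← pow_succ,
          show a - 1 - u - 1 - p + 1 = a - 1 - u + 1 - 1 - p by omega]
      · rw [show u + (a - 1 - u) = a - 1 by omega,
          show a - 1 - u + 1 - 1 - (a - 1 - u) = 0 by omega, pow_zero, mul_one]
    rw [key, ih, hB, hC, sub_mul, sub_mul, hA, pow_succ]
    noncomm_ring
end

section
/- Let A be a ring, B₀ ⊆ B ⊆ A subrings, and s, s', x, y ∈ A with s' ∈ B, x ∈ B, such that: s commutes with every element of B₀; x commutes with every element of B₀; s·s'·s = s'·s·s'; s·s = 1; x·y = y·x; and s·x = y·s − 1. Then: (i) for all b, b' ∈ B₀, the element s·b·s'·b'·s lies in the additive subgroup of A generated by {u·s·v : u, v ∈ B}; and (ii) for every b ∈ B₀ and every integer 0 ≤ a ≤ d−1 (d ≥ 1 any integer), the element s·b·x^a·s lies in the sum of that additive subgroup and the additive subgroups generated by {u·y^t : u ∈ B} for 0 ≤ t ≤ a. (Lemma 5.6 of the paper, modelling s = s_n, s' = s_{n−1},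 x = x_n, y = x_{n+1}, B = H_n^λ, B₀ = H_{n−1}^λ inside A = H_{n+1}^λ.) -/
/-- Lemma 5.6: (i) `s B₀ s' B₀ s ⊆ B s B` and
(ii) `s B₀ x^a s ⊆ B s B + ∑_{t ≤ a} B y^t` for `0 ≤ a ≤ d - 1`. -/
theorem stmt7 {A : Type*} [Ring A] (B₀ B : Subring A) (hB : B₀ ≤ B)
    (d : ℕ) (hd : 1 ≤ d)
    (s s' x y : A) (hs' : s' ∈ B) (hx : x ∈ B)
    (hsB₀ : ∀ b ∈ B₀, s * b = b * s)
    (hxB₀ : ∀ b ∈ B₀, x * b = b * x)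
    (hbraid : s * s' * s = s' * s * s')
    (hss : s * s = 1) (hxy : x * y = y * x) (hsx : s * x = y * s - 1) :
    (∀ b ∈ B₀, ∀ b' ∈ B₀,
        s * b * s' * b' * s ∈
          AddSubgroup.closure {z : A | ∃ u ∈ B, ∃ v ∈ B, z = u * s * v}) ∧
    (∀ b ∈ B₀, ∀ a : ℕ, a ≤ d - 1 →
        s * b * x ^ a * s ∈
          AddSubgroup.closure {z : A | ∃ u ∈ B, ∃ v ∈ B, z = u * s * v} ⊔
            ⨆ t ∈ Finset.Iic a,
              AddSubgroup.closure {z : A | ∃ u ∈ B, z = u * y ^ t}) := by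
  set S : AddSubgroup A :=
    AddSubgroup.closure {z : A | ∃ u ∈ B, ∃ v ∈ B, z = u * s * v} with hS
  set Y : ℕ → AddSubgroup A :=
    fun t => AddSubgroup.closure {z : A | ∃ u ∈ B, z = u * y ^ t} with hY
  have memS : ∀ u ∈ B, ∀ v ∈ B, u * s * v ∈ S := fun u hu v hv =>
    AddSubgroup.subset_closure ⟨u, hu, v, hv, rfl⟩
  have memY : ∀ t : ℕ, ∀ u ∈ B, u * y ^ t ∈ Y t := fun t u hu =>
    AddSubgroup.subset_closure ⟨u, hu, rfl⟩
  -- stability lemmas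
  have Sl : ∀ c ∈ B, ∀ z ∈ S, c * z ∈ S := by
    intro c hc z hz
    have h : S ≤ AddSubgroup.comap (AddMonoidHom.mulLeft c) S := by
      rw [hS, AddSubgroup.closure_le]
      rintro z ⟨u, hu, v, hv, rfl⟩
      have : c * (u * s * v) = (c * u) * s * v := by rw [mul_assoc, mul_assoc, mul_assoc]
      simpa [AddMonoidHom.mulLeft, this] using memS (c*u) (B.mul_mem hc hu) v hv
    exact h hz
  have Sr : ∀ c ∈ B, ∀ z ∈ S, z * c ∈ S := by
    intro c hc z hz
    have h : S ≤ AddSubgroup.comap (AddMonoidHom.mulRight c) S := by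
      rw [hS, AddSubgroup.closure_le]
      rintro z ⟨u, hu, v, hv, rfl⟩
      have : (u * s * v) * c = u * s * (v * c) := by rw [mul_assoc]
      simpa [AddMonoidHom.mulRight, this] using memS u hu (v*c) (B.mul_mem hv hc)
    exact h hz
  have Yl : ∀ t : ℕ, ∀ c ∈ B, ∀ z ∈ Y t, c * z ∈ Y t := by
    intro t c hc z hz
    have h : Y t ≤ AddSubgroup.comap (AddMonoidHom.mulLeft c) (Y t) := by
      rw [hY, AddSubgroup.closure_le]
      rintro z ⟨u, hu, rfl⟩
      have : c * (u * y ^ t) = (c * u) * y ^ t := by rw [mul_assoc]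
      simpa [AddMonoidHom.mulLeft, this] using memY t (c*u) (B.mul_mem hc hu)
    exact h hz
  have hcomm : ∀ t m : ℕ, y ^ t * x ^ m = x ^ m * y ^ t := fun t m =>
    (((show Commute x y from hxy).symm).pow_pow t m).eq
  have Yx : ∀ t : ℕ, ∀ z ∈ Y t, z * x ∈ Y t := by
    intro t z hz
    have h : Y t ≤ AddSubgroup.comap (AddMonoidHom.mulRight x) (Y t) := by
      rw [hY, AddSubgroup.closure_le]
      rintro z ⟨u, hu, rfl⟩
      have : (u * y ^ t) * x = (u * x) * y ^ t := by
        rw [mul_assoc, mul_assoc]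
        congr 1
        simpa using hcomm t 1
      simpa [AddMonoidHom.mulRight, this] using memY t (u*x) (B.mul_mem hu hx)
    exact h hz
  constructor
  · -- part (i)
    intro b hb b' hb'
    have h1 : ∀ c : A, s * (b * c) = b * (s * c) := fun c => by
      rw [← mul_assoc, hsB₀ b hb, mul_assoc]
    have hbr : ∀ c : A, s * (s' * (s * c)) = s' * (s * (s' * c)) := fun c => by
      simp only [← mul_assoc, hbraid]
    have key : s * b * s' * b' * s = (b * s') * s * (s' * b') := by
      simp only [mul_assoc]
      rw [← hsB₀ b' hb', h1, hbr]
    rw [key]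
    exact memS (b * s') (B.mul_mem (hB hb) hs') (s' * b') (B.mul_mem hs' (hB hb'))
  · -- part (ii)
    intro b hb a _
    set T : AddSubgroup A := S ⊔ ⨆ t ∈ Finset.Iic a, Y t with hT
    have SleT : S ≤ T := le_sup_left
    have YleT : ∀ t ≤ a, Y t ≤ T := fun t ht =>
      le_sup_of_le_right (le_iSup₂ (f := fun t _ => Y t) t (Finset.mem_Iic.mpr ht))
    have Tl : ∀ z ∈ T, b * z ∈ T := by
      intro z hz
      have h : T ≤ AddSubgroup.comap (AddMonoidHom.mulLeft b) T := by
        rw [hT]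
        apply sup_le
        · intro w hw
          exact SleT (Sl b (hB hb) w hw)
        · apply iSup₂_le
          intro t ht w hw
          exact YleT t (Finset.mem_Iic.mp ht) (Yl t b (hB hb) w hw)
      exact h hz
    have Tx : ∀ z ∈ T, z * x ∈ T := by
      intro z hz
      have h : T ≤ AddSubgroup.comap (AddMonoidHom.mulRight x) T := by
        rw [hT]
        apply sup_le
        · intro w hw
          exact SleT (Sr x hx w hw)
        · apply iSup₂_le
          intro t ht w hw
          exact YleT t (Finset.mem_Iic.mp ht) (Yx t w hw)
      exact h hz
    have hys : y * s = s * x + 1 := by rw [hsx]; noncomm_ring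
    -- key reduction lemma
    have key : ∀ t ≤ a, ∀ m : ℕ, x ^ m * y ^ t * s ∈ T := by
      intro t
      induction t with
      | zero =>
        intro _ m
        have : x ^ m * y ^ 0 * s = x ^ m * s * 1 := by simp
        rw [this]
        exact SleT (memS (x ^ m) (B.pow_mem hx m) 1 B.one_mem)
      | succ t ih =>
        intro hta m
        have ht : t ≤ a := Nat.le_of_succ_le hta
        have e : x ^ m * y ^ (t+1) * s = (x ^ m * y ^ t * s) * x + x ^ m * y ^ t := by
          rw [pow_succ, ← mul_assoc, mul_assoc (x ^ m * y ^ t) y s, hys]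
          noncomm_ring
        rw [e]
        exact T.add_mem (Tx _ (ih ht m)) (YleT t ht (memY t (x ^ m) (B.pow_mem hx m)))
    -- the formula s * x^a = y^a * s - ∑
    have hF : ∀ n : ℕ, s * x ^ n = y ^ n * s - ∑ t ∈ Finset.range n, y ^ t * x ^ (n - 1 - t) := by
      intro n
      induction n with
      | zero => simp
      | succ n ih =>
        rw [pow_succ, ← mul_assoc, ih, sub_mul, Finset.sum_mul, mul_assoc, hsx,
          Finset.sum_range_succ]
        have h1 : ∑ t ∈ Finset.range n, y ^ t * x ^ (n - 1 - t) * x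
            = ∑ t ∈ Finset.range n, y ^ t * x ^ (n + 1 - 1 - t) := by
          refine Finset.sum_congr rfl fun t ht => ?_
          rw [mul_assoc, ← pow_succ]
          congr 2
          have := Finset.mem_range.mp ht
          omega
        rw [h1]
        have h2 : (n + 1 - 1 - n : ℕ) = 0 := by omega
        rw [h2, pow_zero, mul_one, mul_sub, mul_one, ← mul_assoc, ← pow_succ]
        abel
    have main : s * b * x ^ a * s = b * y ^ a - ∑ t ∈ Finset.range a, b * (x ^ (a-1-t) * y ^ t * s) := by
      have e1 : s * b * x ^ a * s = b * (s * x ^ a * s) := by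
        rw [hsB₀ b hb, mul_assoc, mul_assoc, mul_assoc]
      rw [e1, mul_assoc s (x ^ a) s]
      rw [show s * (x ^ a * s) = s * x ^ a * s from (mul_assoc _ _ _).symm, hF a, sub_mul,
        mul_assoc, hss, mul_one, Finset.sum_mul]
      rw [mul_sub, Finset.mul_sum]
      congr 1
      refine Finset.sum_congr rfl fun t ht => ?_
      rw [mul_assoc (y ^ t), ← hcomm t (a-1-t)]
      simp only [mul_assoc]
    rw [main]
    refine T.sub_mem (YleT a le_rfl (memY a b (hB hb))) (T.sum_mem fun t ht => ?_)
    exact Tl _ (key t (Nat.le_of_lt (Finset.mem_range.mp ht)) (a-1-t))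
end

section
/- Let A be a ring, B ⊆ A a subring, and s, x, y ∈ A with x ∈ B, such that y commutes with every element of B, s·s = 1, x·y = y·x, and s·x = y·s − 1. Let M be an abelian group and T : A → M an additive map such that T(u) = 0 for every u in the additive subgroup of A generated by {b·s·b' : b, b' ∈ B}. Then T(y·z) = T(z·y) for every z in the additive subgroup of A generated by {b·s·b' : b, b' ∈ B} ∪ {b·y^k : b ∈ B, k ∈ ℕ}. (Lemma 5.7 of the paper: the trace tr_{n+1} : H_{n+1}^λ → H_n^λ satisfies tr_{n+1}(x_{n+1}·z) = tr_{n+1}(z·x_{n+1}) for all z, since by the bimodule decomposition every element of H_{n+1}^λ lies in this additive subgroup.) -/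
/-- Lemma 5.7: if the additive map `T` kills `B s B`, then `T (y ⬝ z) = T (z ⬝ y)` for every
`z` in the additive subgroup generated by `B s B` together with the `b ⬝ y^k`. -/
theorem stmt8 {A M : Type*} [Ring A] [AddCommGroup M] (B : Subring A)
    (s x y : A) (hx : x ∈ B)
    (hyB : ∀ b ∈ B, y * b = b * y)
    (hss : s * s = 1) (hxy : x * y = y * x) (hsx : s * x = y * s - 1)
    (T : A →+ M)
    (hT : ∀ u ∈ AddSubgroup.closure {z : A | ∃ b ∈ B, ∃ b' ∈ B, z = b * s * b'}, T u = 0)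
    (z : A)
    (hz : z ∈ AddSubgroup.closure
        ({w : A | ∃ b ∈ B, ∃ b' ∈ B, w = b * s * b'} ∪
          {w : A | ∃ b ∈ B, ∃ k : ℕ, w = b * y ^ k})) :
    T (y * z) = T (z * y) := by
  have hys : y * s = s * x + 1 := by rw [hsx, sub_add_cancel]
  have hsy : s * y = x * s + 1 := by
    have h1 : s * (y * s) = s * (s * x) + s := by rw [hys, mul_add, mul_one]
    have h2 : s * y * s = x + s := by
      rw [← mul_assoc] at h1; rw [h1, ← mul_assoc, hss, one_mul]
    have h3 : s * y * s * s = (x + s) * s := by rw [h2]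
    calc s * y = s * y * (s * s) := by rw [hss, mul_one]
      _ = x * s + 1 := by rw [← mul_assoc, h3, add_mul, hss]
  induction hz using AddSubgroup.closure_induction with
  | mem w hw =>
    rcases hw with ⟨b, hb, b', hb', rfl⟩ | ⟨b, hb, k, rfl⟩
    · have e1 : y * (b * s * b') = b * s * (x * b') + b * b' := by
        rw [show y * (b * s * b') = (y * b) * s * b' by noncomm_ring, hyB b hb]
        rw [show b * y * s * b' = b * (y * s) * b' by noncomm_ring, hys]; noncomm_ring
      have e2 : (b * s * b') * y = b * x * s * b' + b * b' := by
        rw [show b * s * b' * y = b * s * (b' * y) by noncomm_ring, ← hyB b' hb']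
        rw [show b * s * (y * b') = b * (s * y) * b' by noncomm_ring, hsy]; noncomm_ring
      rw [e1, e2, map_add, map_add]
      have z1 : T (b * s * (x * b')) = 0 := hT _ (AddSubgroup.subset_closure
        ⟨b, hb, x * b', B.mul_mem hx hb', rfl⟩)
      have z2 : T (b * x * s * b') = 0 := hT _ (AddSubgroup.subset_closure
        ⟨b * x, B.mul_mem hb hx, b', hb', by noncomm_ring⟩)
      rw [z1, z2]
    · rw [show y * (b * y ^ k) = (y * b) * y ^ k by noncomm_ring, hyB b hb,
        show b * y ^ k * y = b * y * y ^ k by rw [mul_assoc, mul_assoc, ← pow_succ, ← pow_succ']]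
  | zero => simp
  | add a c _ _ ha hc => rw [mul_add, add_mul, map_add, map_add, ha, hc]
  | neg a _ ha => rw [mul_neg, neg_mul, map_neg, map_neg, ha]
end

section
/- Let A be a ring, B ⊆ A a subring, d ≥ 1 an integer, and s, x, y ∈ A with x ∈ B, such that y commutes with every element of B, s·s = 1, x·y = y·x, and s·x = y·s − 1. Let M be an abelian group and T : A → M an additive map such that T(u) = 0 for every u in the additive subgroup of A generated by {b·s·b' : b, b' ∈ B}, and T(b·y^j) = 0 for every b ∈ B and every 0 ≤ j ≤ d−2. Then for every g in the additive subgroup of A generated by {b·y^m : b ∈ B, 0 ≤ m ≤ d−1}, one has T(s·g) = 0 and T(g·s) = 0. (Lemma 5.8 of the paper, with T the trace tr_{n+1} : H_{n+1}^λ → H_n^λ, s = s_n, x = x_n, y = x_{n+1}, B = H_n^λ.) -/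
/-- Lemma 5.8: if the additive map `T` kills `B s B` and kills `b ⬝ y^j` for `0 ≤ j ≤ d - 2`,
then `T (s ⬝ g) = 0 = T (g ⬝ s)` for every `g` in the additive subgroup generated by the
`b ⬝ y^m` with `0 ≤ m ≤ d - 1`. -/
theorem stmt9 {A M : Type*} [Ring A] [AddCommGroup M] (B : Subring A)
    (d : ℕ) (hd : 1 ≤ d)
    (s x y : A) (hx : x ∈ B)
    (hyB : ∀ b ∈ B, y * b = b * y)
    (hss : s * s = 1) (hxy : x * y = y * x) (hsx : s * x = y * s - 1)
    (T : A →+ M)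
    (hT1 : ∀ u ∈ AddSubgroup.closure {z : A | ∃ b ∈ B, ∃ b' ∈ B, z = b * s * b'}, T u = 0)
    (hT2 : ∀ b ∈ B, ∀ j : ℕ, j + 2 ≤ d → T (b * y ^ j) = 0)
    (g : A)
    (hg : g ∈ AddSubgroup.closure {w : A | ∃ b ∈ B, ∃ m : ℕ, m < d ∧ w = b * y ^ m}) :
    T (s * g) = 0 ∧ T (g * s) = 0 := by
  have hys : y * s = s * x + 1 := by rw [hsx, sub_add_cancel]
  have hsy : s * y = x * s + 1 := by
    have h1 : x = s * y * s - s := by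
      calc x = (s * s) * x := by rw [hss, one_mul]
        _ = s * (s * x) := by noncomm_ring
        _ = s * (y * s - 1) := by rw [hsx]
        _ = s * y * s - s := by noncomm_ring
    calc s * y = s * y * (s * s) := by rw [hss, mul_one]
      _ = (s * y * s) * s := by noncomm_ring
      _ = (x + s) * s := by rw [show s * y * s = x + s by rw [h1, sub_add_cancel]]
      _ = x * s + 1 := by rw [add_mul, hss]
  have hyBpow : ∀ b ∈ B, ∀ k : ℕ, y ^ k * b = b * y ^ k := fun b hb k =>
    (show Commute y b from hyB b hb).pow_left k
  have hxypow : ∀ j k : ℕ, y ^ j * x ^ k = x ^ k * y ^ j := fun j k =>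
    ((show Commute x y from hxy).symm.pow_pow j k)
  have F1 : ∀ m : ℕ, s * y ^ m = x ^ m * s + ∑ j ∈ Finset.range m, x ^ j * y ^ (m - 1 - j) := by
    intro m
    induction m with
    | zero => simp
    | succ n ih =>
      have h2 : s * y ^ (n + 1) = x * (s * y ^ n) + y ^ n := by
        rw [pow_succ', ← mul_assoc, hsy]; noncomm_ring
      rw [h2, ih, Finset.sum_range_succ']
      simp only [Nat.add_sub_cancel, Nat.sub_sub, Nat.sub_zero, pow_zero, one_mul, pow_succ']
      rw [mul_add, Finset.mul_sum]
      simp only [← mul_assoc]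
      simp only [Nat.add_comm]
      abel
  have F2 : ∀ m : ℕ, y ^ m * s = s * x ^ m + ∑ j ∈ Finset.range m, y ^ j * x ^ (m - 1 - j) := by
    intro m
    induction m with
    | zero => simp
    | succ n ih =>
      have h2 : y ^ (n + 1) * s = (y ^ n * s) * x + y ^ n := by
        rw [pow_succ, mul_assoc, hys]; noncomm_ring
      rw [h2, ih, Finset.sum_range_succ]
      simp only [Nat.add_sub_cancel, Nat.sub_sub, Nat.sub_zero, Nat.sub_self, pow_zero, mul_one]
      rw [add_mul, Finset.sum_mul]
      have hcomm : ∀ j k : ℕ, (y ^ j * x ^ k) * x = y ^ j * x ^ (k + 1) := by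
        intro j k; rw [mul_assoc, ← pow_succ]
      simp only [hcomm]
      have hre : ∀ j ∈ Finset.range n, y ^ j * x ^ (n - (1 + j) + 1) = y ^ j * x ^ (n - j) := by
        intro j hj
        rw [Finset.mem_range] at hj
        congr 2
        omega
      rw [Finset.sum_congr rfl hre, mul_assoc, ← pow_succ, add_assoc]
  have key1 : ∀ m : ℕ, m < d → ∀ b ∈ B, T (s * (b * y ^ m)) = 0 := by
    intro m hm b hb
    have hcb : y ^ m * b = b * y ^ m := hyBpow b hb m
    have h3 : s * (b * y ^ m) = x ^ m * s * b + ∑ j ∈ Finset.range m, (x ^ j * b) * y ^ (m - 1 - j) := by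
      rw [← hcb, ← mul_assoc, F1, add_mul, Finset.sum_mul]
      congr 1
      refine Finset.sum_congr rfl fun j hj => ?_
      rw [mul_assoc, hyBpow b hb (m - 1 - j), ← mul_assoc]
    rw [h3, map_add, map_sum]
    have hz1 : T (x ^ m * s * b) = 0 :=
      hT1 _ (AddSubgroup.subset_closure ⟨x ^ m, pow_mem hx m, b, hb, rfl⟩)
    rw [hz1, zero_add]
    refine Finset.sum_eq_zero fun j hj => ?_
    rw [Finset.mem_range] at hj
    exact hT2 _ (mul_mem (pow_mem hx j) hb) _ (by omega)
  have key2 : ∀ m : ℕ, m < d → ∀ b ∈ B, T ((b * y ^ m) * s) = 0 := by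
    intro m hm b hb
    have h3 : (b * y ^ m) * s = b * s * x ^ m + ∑ j ∈ Finset.range m, (b * x ^ (m - 1 - j)) * y ^ j := by
      rw [mul_assoc, F2, mul_add, Finset.mul_sum]
      congr 1
      · rw [← mul_assoc]
      · refine Finset.sum_congr rfl fun j hj => ?_
        rw [hxypow j (m - 1 - j), ← mul_assoc]
    rw [h3, map_add, map_sum]
    have hz1 : T (b * s * x ^ m) = 0 :=
      hT1 _ (AddSubgroup.subset_closure ⟨b, hb, x ^ m, pow_mem hx m, rfl⟩)
    rw [hz1, zero_add]
    refine Finset.sum_eq_zero fun j hj => ?_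
    rw [Finset.mem_range] at hj
    exact hT2 _ (mul_mem hb (pow_mem hx _)) _ (by omega)
  refine AddSubgroup.closure_induction ?_ (by simp) ?_ ?_ hg
  · rintro w ⟨b, hb, m, hm, rfl⟩
    exact ⟨key1 m hm b hb, key2 m hm b hb⟩
  · rintro a b - - ⟨ha1, ha2⟩ ⟨hb1, hb2⟩
    constructor
    · rw [mul_add, map_add, ha1, hb1, add_zero]
    · rw [add_mul, map_add, ha2, hb2, add_zero]
  · rintro a - ⟨ha1, ha2⟩
    constructor
    · rw [mul_neg, map_neg, ha1, neg_zero]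
    · rw [neg_mul, map_neg, ha2, neg_zero]
end

section
/- Let A be a ring, B₀ ⊆ B ⊆ A subrings, d ≥ 1 an integer, and s, s', x, y ∈ A with s' ∈ B, x ∈ B, such that: s and x each commute with every element of B₀; y commutes with every element of B; s·s'·s = s'·s·s'; s·s = 1; x·y = y·x; and s·x = y·s − 1. Let T : A → B and T₀ : B → B be additive maps such that: T(u) = 0 for every u in the additive subgroup of A generated by {b·s·b' : b, b' ∈ B}; T(b·y^j) = 0 for all b ∈ B and 0 ≤ j ≤ d−2; T(b·y^{d−1}) = b for all b ∈ B; T₀(u) = 0 for every u in the additive subgroup of B generated by {b₀·s'·b₀' : b₀, b₀' ∈ B₀}; T₀(b₀·x^j) = 0 for all b₀ ∈ B₀ and 0 ≤ j ≤ d−2; and T₀(b₀·x^{d−1}) = b₀ for all b₀ ∈ B₀. Then T(s·b·s) = T₀(b) for every b in the additive subgroup of B generated by {b₀·s'·b₀' : b₀, b₀' ∈ B₀} ∪ {b₀·x^m : b₀ ∈ B₀, 0 ≤ m ≤ d−1}. (Corollary 5.9 of the paper: tr_{n+1}(s_n·y·s_n) = tr_n(y) for all y ∈ H_n^λ, with s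 = s_n, s' = s_{n−1}, x = x_n, y = x_{n+1}, B = H_n^λ, B₀ = H_{n−1}^λ, T = tr_{n+1}, T₀ = tr_n, and the decomposition H_n^λ = H_{n−1}^λ s_{n−1} H_{n−1}^λ ⊕ ⊕_{j<d} H_{n−1}^λ x_n^j.) -/
/-- Corollary 5.9: `T (s ⬝ b ⬝ s) = T₀ b` for every `b` in the additive subgroup of `B`
generated by `B₀ s' B₀` together with the `b₀ ⬝ x^m`, `0 ≤ m ≤ d - 1`. -/
theorem stmt10 {A : Type*} [Ring A] (B : Subring A) (B₀ : Subring B)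
    (d : ℕ) (hd : 1 ≤ d)
    (s y : A) (s' x : B)
    (hsB₀ : ∀ b ∈ B₀, s * (b : A) = (b : A) * s)
    (hxB₀ : ∀ b ∈ B₀, x * b = b * x)
    (hyB : ∀ b : B, y * (b : A) = (b : A) * y)
    (hbraid : s * (s' : A) * s = (s' : A) * s * (s' : A))
    (hss : s * s = 1)
    (hxy : (x : A) * y = y * (x : A))
    (hsx : s * (x : A) = y * s - 1)
    (T : A →+ B) (T₀ : B →+ B)
    (hT1 : ∀ u ∈ AddSubgroup.closure {z : A | ∃ b ∈ B, ∃ b' ∈ B, z = b * s * b'}, T u = 0)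
    (hT2 : ∀ b : B, ∀ j : ℕ, j + 2 ≤ d → T ((b : A) * y ^ j) = 0)
    (hT3 : ∀ b : B, T ((b : A) * y ^ (d - 1)) = b)
    (hT₀1 : ∀ u ∈ AddSubgroup.closure {z : B | ∃ b₀ ∈ B₀, ∃ b₀' ∈ B₀, z = b₀ * s' * b₀'},
      T₀ u = 0)
    (hT₀2 : ∀ b₀ ∈ B₀, ∀ j : ℕ, j + 2 ≤ d → T₀ (b₀ * x ^ j) = 0)
    (hT₀3 : ∀ b₀ ∈ B₀, T₀ (b₀ * x ^ (d - 1)) = b₀) :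
    ∀ b ∈ AddSubgroup.closure
        ({z : B | ∃ b₀ ∈ B₀, ∃ b₀' ∈ B₀, z = b₀ * s' * b₀'} ∪
          {z : B | ∃ b₀ ∈ B₀, ∃ m : ℕ, m < d ∧ z = b₀ * x ^ m}),
      T (s * (b : A) * s) = T₀ b := by
  have cxy : Commute (x : A) y := hxy
  -- key identity : s * x^m = y^m * s - ∑_{j<m} y^j x^{m-1-j}
  have key : ∀ m : ℕ, s * (x : A) ^ m
      = y ^ m * s - ∑ j ∈ Finset.range m, y ^ j * (x : A) ^ (m - 1 - j) := by
    intro m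
    induction m with
    | zero => simp
    | succ n ih =>
      rw [pow_succ, ← mul_assoc, ih, sub_mul, Finset.sum_mul, Finset.sum_range_succ]
      have h1 : ∀ j ∈ Finset.range n,
          y ^ j * (x : A) ^ (n - 1 - j) * (x : A) = y ^ j * (x : A) ^ (n - j) := by
        intro j hj
        rw [Finset.mem_range] at hj
        rw [mul_assoc, ← pow_succ]
        congr 2 <;> omega
      rw [Finset.sum_congr rfl h1]
      have h2 : ∀ j ∈ Finset.range n,
          y ^ j * (x : A) ^ (n + 1 - 1 - j) = y ^ j * (x : A) ^ (n - j) := by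
        intro j hj
        rw [Finset.mem_range] at hj
        congr 2 <;> omega
      rw [Finset.sum_congr rfl h2]
      have h3 : n + 1 - 1 - n = 0 := by omega
      rw [h3, pow_zero, mul_one, mul_assoc, hsx, pow_succ]
      noncomm_ring
  -- vanishing lemma
  have L2 : ∀ (b : B) (k : ℕ), k < d → T ((b : A) * y ^ k * s) = 0 := by
    intro b k hk
    have hy : y ^ k * s = s * (x : A) ^ k
        + ∑ j ∈ Finset.range k, y ^ j * (x : A) ^ (k - 1 - j) := by
      rw [key k]; abel
    have h1 : (b : A) * y ^ k * s = (b : A) * s * (x : A) ^ k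
        + ∑ j ∈ Finset.range k, ((b * x ^ (k - 1 - j) : B) : A) * y ^ j := by
      rw [mul_assoc, hy, mul_add, Finset.mul_sum, ← mul_assoc]
      congr 1
      refine Finset.sum_congr rfl fun j hj => ?_
      push_cast
      rw [← (cxy.pow_pow (k - 1 - j) j).eq, mul_assoc]
    rw [h1, map_add, map_sum]
    have hz : T ((b : A) * s * (x : A) ^ k) = 0 := by
      apply hT1
      apply AddSubgroup.subset_closure
      exact ⟨(b : A), b.2, (x : A) ^ k, pow_mem x.2 k, rfl⟩
    rw [hz]
    rw [Finset.sum_eq_zero, add_zero]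
    intro j hj
    rw [Finset.mem_range] at hj
    exact hT2 _ j (by omega)
  intro b hb
  induction hb using AddSubgroup.closure_induction with
  | mem z hz =>
    rcases hz with ⟨b₀, hb₀, b₀', hb₀', rfl⟩ | ⟨b₀, hb₀, m, hm, rfl⟩
    · -- case b₀ * s' * b₀'
      have h0 : T₀ (b₀ * s' * b₀') = 0 := by
        apply hT₀1
        exact AddSubgroup.subset_closure ⟨b₀, hb₀, b₀', hb₀', rfl⟩
      rw [h0]
      have hc : s * ((b₀ * s' * b₀' : B) : A) * s
          = ((b₀ * s' : B) : A) * s * ((s' * b₀' : B) : A) := by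
        push_cast
        have e1 : s * ((b₀ : B) : A) = ((b₀ : B) : A) * s := hsB₀ b₀ hb₀
        have e2 : s * ((b₀' : B) : A) = ((b₀' : B) : A) * s := hsB₀ b₀' hb₀'
        calc s * (((b₀ : B) : A) * (s' : A) * ((b₀' : B) : A)) * s
            = (s * ((b₀ : B) : A)) * ((s' : A) * (((b₀' : B) : A) * s)) := by noncomm_ring
          _ = (((b₀ : B) : A) * s) * ((s' : A) * (s * ((b₀' : B) : A))) := by rw [e1, ← e2]
          _ = ((b₀ : B) : A) * (s * (s' : A) * s) * ((b₀' : B) : A) := by noncomm_ring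
          _ = ((b₀ : B) : A) * ((s' : A) * s * (s' : A)) * ((b₀' : B) : A) := by rw [hbraid]
          _ = ((b₀ : B) : A) * (s' : A) * s * ((s' : A) * ((b₀' : B) : A)) := by noncomm_ring
      rw [hc]
      apply hT1
      exact AddSubgroup.subset_closure
        ⟨((b₀ * s' : B) : A), (b₀ * s').2, ((s' * b₀' : B) : A), (s' * b₀').2, rfl⟩
    · -- case b₀ * x^m
      have hc : s * ((b₀ * x ^ m : B) : A) * s
          = (b₀ : A) * y ^ m
            - ∑ j ∈ Finset.range m, ((b₀ * x ^ (m - 1 - j) : B) : A) * y ^ j * s := by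
        push_cast
        rw [show s * (((b₀ : B) : A) * (x : A) ^ m) * s
            = ((b₀ : B) : A) * (s * (x : A) ^ m * s) by
              rw [← mul_assoc, hsB₀ b₀ hb₀]; noncomm_ring]
        rw [key m, sub_mul, Finset.sum_mul, mul_sub, mul_assoc (y ^ m), hss, mul_one,
          Finset.mul_sum]
        congr 1
        refine Finset.sum_congr rfl fun j hj => ?_
        rw [← (cxy.pow_pow (m - 1 - j) j).eq]
        noncomm_ring
      rw [hc, map_sub, map_sum, Finset.sum_eq_zero, sub_zero]
      · rcases eq_or_lt_of_le (Nat.succ_le_of_lt hm) with he | hlt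
        · have hm1 : m = d - 1 := by omega
          subst hm1
          rw [hT3 b₀, hT₀3 b₀ hb₀]
        · rw [hT2 b₀ m (by omega), hT₀2 b₀ hb₀ m (by omega)]
      · intro j hj
        rw [Finset.mem_range] at hj
        exact L2 _ j (by omega)
  | zero => simp
  | add a b ha hb iha ihb =>
    have : s * ((a + b : B) : A) * s = s * (a : A) * s + s * (b : A) * s := by
      push_cast; noncomm_ring
    rw [this, map_add, map_add, iha, ihb]
  | neg a ha iha =>
    have : s * ((-a : B) : A) * s = -(s * (a : A) * s) := by push_cast; noncomm_ring
    rw [this, map_neg, map_neg, iha]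
end

section
/- Let F be a field of characteristic zero and n, k ∈ ℕ. In the group algebra F[S_{n+k}] of the symmetric group on {1, …, n+k}, let B be the image of F[S_n] under the embedding induced by letting S_n permute {1, …, n} and fix {n+1, …, n+k} pointwise. Then the centralizer of B in F[S_{n+k}] equals the subalgebra generated by: (i) the center of B, (ii) the permutations that fix {1, …, n} pointwise, and (iii) the Jucys–Murphy elements X_{n+j} := ∑_{i=1}^{n+j−1} (i, n+j) for j = 1, …, k, where (i, m) denotes the transposition of i and m. (The level-one case λ = ω_0 of Corollary 8.3 of the paper, which states that the centralizer of H_n^λ in H_{n+k}^λ is generated by H_k and the center of H_n^λ; in level one H_n^λ ≅ F[S_n] with x_m mapping to the Jucys–Murphy element X_m. This case is Olshanski's centralizer theorem.) -/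
open Finset MonoidAlgebra Equiv

noncomputable section
namespace Olsh

variable (F : Type*) [Field F] [CharZero F] (n k : ℕ)

/-- the embedding hom `S_n →* S_{n+k}` -/
def oE : Equiv.Perm (Fin n) →* Equiv.Perm (Fin (n + k)) :=
  Equiv.Perm.viaEmbeddingHom (Fin.castLEEmb (Nat.le_add_right n k))

variable {n k}

lemma oE_apply_top (π : Equiv.Perm (Fin n)) {x : Fin (n + k)} (hx : ¬ (x : ℕ) < n) :
    oE n k π x = x := by
  apply Equiv.Perm.viaEmbedding_apply_of_notMem
  rintro ⟨y, rfl⟩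
  exact hx (by simpa using y.isLt)

lemma oE_apply_bot (π : Equiv.Perm (Fin n)) {x : Fin (n + k)} (hx : (x : ℕ) < n) :
    oE n k π x = Fin.castLE (Nat.le_add_right n k) (π ⟨x, hx⟩) := by
  have : x = Fin.castLEEmb (Nat.le_add_right n k) ⟨x, hx⟩ := by
    simp [Fin.castLEEmb, Fin.ext_iff]
  conv_lhs => rw [this]
  exact Equiv.Perm.viaEmbedding_apply π _ _

lemma oE_bot (π : Equiv.Perm (Fin n)) {x : Fin (n + k)} (hx : (x : ℕ) < n) :
    ((oE n k π x : ℕ) < n) := by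
  rw [oE_apply_bot π hx]; simpa using (π ⟨x, hx⟩).isLt

lemma oE_bot_iff (π : Equiv.Perm (Fin n)) (x : Fin (n + k)) :
    ((oE n k π x : ℕ) < n) ↔ (x : ℕ) < n := by
  constructor
  · intro h
    by_contra hx
    rw [oE_apply_top π hx] at h
    exact hx h
  · exact oE_bot π

/-- a permutation fixing the top points is in the range of `oE` -/
lemma mem_range_oE {v : Equiv.Perm (Fin (n + k))} (hv : ∀ x : Fin (n + k), ¬ (x : ℕ) < n → v x = x) :
    ∃ π : Equiv.Perm (Fin n), oE n k π = v := by
  have hv' : ∀ x : Fin (n + k), ¬ (x : ℕ) < n → v⁻¹ x = x := by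
    intro x hx
    have := hv x hx
    calc v⁻¹ x = v⁻¹ (v x) := by rw [this]
    _ = x := by simp
  have hbot : ∀ x : Fin (n + k), (x : ℕ) < n → ((v x : ℕ) < n) := by
    intro x hx
    by_contra h
    have h2 := hv _ h
    have h3 := v.injective h2
    exact h (by rw [h3]; exact hx)
  have hbot' : ∀ x : Fin (n + k), (x : ℕ) < n → ((v⁻¹ x : ℕ) < n) := by
    intro x hx
    by_contra h
    have h2 := hv' _ h
    have h3 := v⁻¹.injective h2
    exact h (by rw [h3]; exact hx)
  set c : Fin n → Fin (n+k) := Fin.castLE (Nat.le_add_right n k) with hc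
  have hcv : ∀ y : Fin n, ((c y : ℕ) < n) := fun y => y.isLt
  refine ⟨⟨fun y => ⟨v (c y), hbot _ (hcv y)⟩, fun y => ⟨v⁻¹ (c y), hbot' _ (hcv y)⟩, ?_, ?_⟩, ?_⟩
  · intro y
    simp only [Fin.ext_iff]
    have : c (⟨(v (c y) : ℕ), hbot _ (hcv y)⟩ : Fin n) = v (c y) := rfl
    simp [this, hc]
  · intro y
    simp only [Fin.ext_iff]
    have : c (⟨(v⁻¹ (c y) : ℕ), hbot' _ (hcv y)⟩ : Fin n) = v⁻¹ (c y) := rfl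
    simp [this, hc]
  · ext x
    by_cases hx : (x : ℕ) < n
    · rw [oE_apply_bot _ hx]
      rfl
    · rw [oE_apply_top _ hx, hv x hx]


section Alg
variable (F : Type*) [Field F] [CharZero F] (n k : ℕ)

/-- shorthand for `of` -/
def ofg : Equiv.Perm (Fin (n + k)) →* MonoidAlgebra F (Equiv.Perm (Fin (n + k))) :=
  MonoidAlgebra.of F _

variable {F n k}

lemma ofg_def (g : Equiv.Perm (Fin (n + k))) :
    ofg F n k g = MonoidAlgebra.single g (1 : F) := rfl

/-- coefficient of a finite sum of group elements -/
lemma sum_ofg_apply {I : Type*} (s : Finset I) (Φ : I → Equiv.Perm (Fin (n + k)))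
    (h : Equiv.Perm (Fin (n + k))) :
    (∑ i ∈ s, ofg F n k (Φ i)).coeff h = ((s.filter fun i => Φ i = h).card : F) := by
  classical
  rw [MonoidAlgebra.coeff_sum, Finset.sum_apply']
  rw [← Finset.sum_boole]
  refine Finset.sum_congr rfl fun i _ => ?_
  rw [ofg_def, MonoidAlgebra.coeff_single, Finsupp.single_apply]

lemma sum_ofg_support {I : Type*} (s : Finset I) (Φ : I → Equiv.Perm (Fin (n + k)))
    (h : Equiv.Perm (Fin (n + k))) (hh : (∑ i ∈ s, ofg F n k (Φ i)).coeff h ≠ 0) :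
    ∃ i ∈ s, Φ i = h := by
  rw [sum_ofg_apply] at hh
  have : (s.filter fun i => Φ i = h).Nonempty := by
    rw [Finset.nonempty_iff_ne_empty]
    intro he
    rw [he] at hh
    simp at hh
  obtain ⟨i, hi⟩ := this
  rw [Finset.mem_filter] at hi
  exact ⟨i, hi.1, hi.2⟩

lemma sum_ofg_ne_zero {I : Type*} (s : Finset I) (Φ : I → Equiv.Perm (Fin (n + k)))
    {h : Equiv.Perm (Fin (n + k))} {i : I} (hi : i ∈ s) (hΦ : Φ i = h) :
    (∑ i ∈ s, ofg F n k (Φ i)).coeff h ≠ 0 := by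
  rw [sum_ofg_apply]
  have : 0 < (s.filter fun i => Φ i = h).card :=
    Finset.card_pos.2 ⟨i, Finset.mem_filter.2 ⟨hi, hΦ⟩⟩
  exact_mod_cast this.ne'

lemma sum_ofg_mul_sum_ofg {I J : Type*} (s : Finset I) (t : Finset J)
    (Φ : I → Equiv.Perm (Fin (n + k))) (Ψ : J → Equiv.Perm (Fin (n + k))) :
    (∑ i ∈ s, ofg F n k (Φ i)) * (∑ j ∈ t, ofg F n k (Ψ j)) =
      ∑ p ∈ s ×ˢ t, ofg F n k (Φ p.1 * Ψ p.2) := by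
  rw [Finset.sum_mul_sum, Finset.sum_product]
  simp [← map_mul]

/-- invariance under conjugation by the bottom group -/
def Inv (a : MonoidAlgebra F (Equiv.Perm (Fin (n + k)))) : Prop :=
  ∀ π : Equiv.Perm (Fin n), ofg F n k (oE n k π) * a = a * ofg F n k (oE n k π)

lemma Inv.mul {a b : MonoidAlgebra F (Equiv.Perm (Fin (n + k)))} (ha : Inv a) (hb : Inv b) :
    Inv (a * b) := fun π => by rw [← mul_assoc, ha π, mul_assoc, hb π, mul_assoc]

lemma Inv.sub {a b : MonoidAlgebra F (Equiv.Perm (Fin (n + k)))} (ha : Inv a) (hb : Inv b) :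
    Inv (a - b) := fun π => by rw [mul_sub, sub_mul, ha π, hb π]

lemma Inv.smul {a : MonoidAlgebra F (Equiv.Perm (Fin (n + k)))} (c : F) (ha : Inv a) :
    Inv (c • a) := fun π => by
  rw [mul_smul_comm, smul_mul_assoc, ha π]

/-- conjugation of an element of the monoid algebra by a group element, as `mapDomain` -/
lemma conj_eq_mapDomain (u : Equiv.Perm (Fin (n + k))) (a : MonoidAlgebra F (Equiv.Perm (Fin (n + k)))) :
    ofg F n k u * a * ofg F n k u⁻¹ = MonoidAlgebra.mapDomain (fun h => u * h * u⁻¹) a := by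
  induction a using MonoidAlgebra.induction_linear with
  | zero => simp
  | add f g hf hg =>
      rw [mul_add, add_mul, hf, hg, MonoidAlgebra.mapDomain_add]
  | single g b =>
      rw [MonoidAlgebra.mapDomain_single, ofg_def, ofg_def,
        MonoidAlgebra.single_mul_single, MonoidAlgebra.single_mul_single]
      simp

lemma Inv.conj_eq {a : MonoidAlgebra F (Equiv.Perm (Fin (n + k)))} (ha : Inv a)
    (π : Equiv.Perm (Fin n)) :
    MonoidAlgebra.mapDomain (fun h => oE n k π * h * (oE n k π)⁻¹) a = a := by
  rw [← conj_eq_mapDomain, ha π, mul_assoc, ← map_mul, mul_inv_cancel, map_one, mul_one]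

lemma Inv.coeff {a : MonoidAlgebra F (Equiv.Perm (Fin (n + k)))} (ha : Inv a)
    (π : Equiv.Perm (Fin n)) (h : Equiv.Perm (Fin (n + k))) :
    a.coeff (oE n k π * h * (oE n k π)⁻¹) = a.coeff h := by
  conv_lhs => rw [← ha.conj_eq π]
  have hinj : Function.Injective (fun h => oE n k π * h * (oE n k π)⁻¹) := by
    intro x y hxy
    simpa using mul_left_cancel (mul_right_cancel hxy)
  exact Finsupp.mapDomain_apply hinj a.coeff h

variable (F)

/-- the orbit-sum element -/
def Esum (g : Equiv.Perm (Fin (n + k))) : MonoidAlgebra F (Equiv.Perm (Fin (n + k))) :=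
  ∑ π : Equiv.Perm (Fin n), ofg F n k (oE n k π * g * (oE n k π)⁻¹)

variable {F}

lemma Esum_def (g : Equiv.Perm (Fin (n + k))) :
    Esum F g = ∑ π : Equiv.Perm (Fin n), ofg F n k (oE n k π * g * (oE n k π)⁻¹) := rfl

lemma inv_Esum (g : Equiv.Perm (Fin (n + k))) : Inv (Esum F g) := by
  intro σ
  rw [Esum_def, Finset.mul_sum, Finset.sum_mul]
  refine Fintype.sum_equiv (Equiv.mulLeft σ) _ _ fun π => ?_
  rw [← map_mul, ← map_mul]
  congr 1
  simp only [Equiv.coe_mulLeft, map_mul]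
  group

lemma Esum_self_ne_zero (g : Equiv.Perm (Fin (n + k))) : (Esum F g).coeff g ≠ (0 : F) := by
  refine sum_ofg_ne_zero Finset.univ _ (Finset.mem_univ (1 : Equiv.Perm (Fin n))) ?_
  simp

lemma Esum_support {g h : Equiv.Perm (Fin (n + k))} (hh : (Esum F g).coeff h ≠ (0:F)) :
    ∃ π, oE n k π * g * (oE n k π)⁻¹ = h := by
  obtain ⟨π, _, hπ⟩ := sum_ofg_support Finset.univ _ h hh
  exact ⟨π, hπ⟩

/-- averaging: an invariant element is a combination of orbit sums -/
lemma Inv.eq_avg {a : MonoidAlgebra F (Equiv.Perm (Fin (n + k)))} (ha : Inv a) :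
    a = ((n.factorial : F))⁻¹ • ∑ h ∈ a.coeff.support, a.coeff h • Esum F h := by
  have key : ∑ h ∈ a.coeff.support, a.coeff h • Esum F h = (n.factorial : ℕ) • a := by
    have e1 : ∀ π : Equiv.Perm (Fin n),
        MonoidAlgebra.mapDomain (fun h => oE n k π * h * (oE n k π)⁻¹) a
          = ∑ h ∈ a.coeff.support, a.coeff h • ofg F n k (oE n k π * h * (oE n k π)⁻¹) := by
      intro π
      rw [MonoidAlgebra.mapDomain, Finsupp.mapDomain]
      rw [Finsupp.sum, MonoidAlgebra.ofCoeff_sum]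
      refine Finset.sum_congr rfl fun h _ => ?_
      rw [ofg_def, MonoidAlgebra.smul_single, smul_eq_mul, mul_one]
      rfl
    calc ∑ h ∈ a.coeff.support, a.coeff h • Esum F h
        = ∑ h ∈ a.coeff.support, ∑ π : Equiv.Perm (Fin n),
            a.coeff h • ofg F n k (oE n k π * h * (oE n k π)⁻¹) := by
          refine Finset.sum_congr rfl fun h _ => ?_
          rw [Esum_def, Finset.smul_sum]
      _ = ∑ π : Equiv.Perm (Fin n), ∑ h ∈ a.coeff.support,
            a.coeff h • ofg F n k (oE n k π * h * (oE n k π)⁻¹) := Finset.sum_comm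
      _ = ∑ _π : Equiv.Perm (Fin n), a := by
          refine Finset.sum_congr rfl fun π _ => ?_
          rw [← e1 π, ha.conj_eq π]
      _ = (Fintype.card (Equiv.Perm (Fin n))) • a := by
          rw [Finset.sum_const, Finset.card_univ]
      _ = (n.factorial : ℕ) • a := by rw [Fintype.card_perm, Fintype.card_fin]
  rw [key]
  rw [← Nat.cast_smul_eq_nsmul F, smul_smul]
  rw [inv_mul_cancel₀ (by exact_mod_cast Nat.factorial_ne_zero n), one_smul]

end Alg

section Comb
variable {n k : ℕ}

/-- the finset of moved bottom points -/
def MB (g : Equiv.Perm (Fin (n + k))) : Finset (Fin (n + k)) :=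
  Finset.univ.filter fun x => (x : ℕ) < n ∧ g x ≠ x

lemma mem_MB {g : Equiv.Perm (Fin (n + k))} {x : Fin (n + k)} :
    x ∈ MB g ↔ (x : ℕ) < n ∧ g x ≠ x := by simp [MB]

lemma MB_mul_subset (u v : Equiv.Perm (Fin (n + k))) : MB (u * v) ⊆ MB u ∪ MB v := by
  intro x hx
  rw [mem_MB] at hx
  obtain ⟨hb, hm⟩ := hx
  by_cases hv : v x = x
  · refine Finset.mem_union_left _ (mem_MB.2 ⟨hb, ?_⟩)
    intro hu
    exact hm (by rw [Equiv.Perm.mul_apply, hv, hu])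
  · exact Finset.mem_union_right _ (mem_MB.2 ⟨hb, hv⟩)

lemma MB_conj (π : Equiv.Perm (Fin n)) (h : Equiv.Perm (Fin (n + k))) :
    MB (oE n k π * h * (oE n k π)⁻¹) = (MB h).image (oE n k π) := by
  ext x
  simp only [Finset.mem_image, mem_MB]
  constructor
  · rintro ⟨hb, hm⟩
    refine ⟨(oE n k π)⁻¹ x, ⟨?_, ?_⟩, by simp⟩
    · have := oE_bot_iff π ((oE n k π)⁻¹ x)
      rw [show ∀ (f : Equiv.Perm (Fin (n + k))) (x : Fin (n + k)), f (f⁻¹ x) = x from fun f x => by simp] at this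
      have h2 := (oE_bot_iff π⁻¹ x)
      rw [map_inv] at *
      exact h2.mpr hb
    · intro hc
      apply hm
      simp only [Equiv.Perm.mul_apply]
      rw [hc]
      simp
  · rintro ⟨y, ⟨hyb, hym⟩, rfl⟩
    constructor
    · exact oE_bot π hyb
    · simp only [Equiv.Perm.mul_apply]
      intro hc
      rw [show ∀ (f : Equiv.Perm (Fin (n + k))) (x : Fin (n + k)), f⁻¹ (f x) = x from fun f x => by simp] at hc
      exact hym ((oE n k π).injective hc)

lemma card_MB_conj (π : Equiv.Perm (Fin n)) (h : Equiv.Perm (Fin (n + k))) :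
    (MB (oE n k π * h * (oE n k π)⁻¹)).card = (MB h).card := by
  rw [MB_conj, Finset.card_image_of_injective _ (oE n k π).injective]

/-- conjugating by a permutation that fixes every moved point does nothing -/
lemma conj_eq_self_of_fixes {β : Type*} (π h : Equiv.Perm β)
    (H : ∀ x, h x ≠ x → π x = x) : π * h * π⁻¹ = h := by
  have hd : π.Disjoint h := by
    intro x
    by_cases hx : h x = x
    · exact Or.inr hx
    · exact Or.inl (H x hx)
  have := hd.commute.eq
  rw [this, mul_assoc, mul_inv_cancel, mul_one]

/-- extend an injective-on-`s` map to a permutation -/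
lemma exists_perm_extend {α : Type*} [Fintype α] [DecidableEq α] (s : Finset α) (f : α → α)
    (hinj : Set.InjOn f s) : ∃ π : Equiv.Perm α, ∀ x ∈ s, π x = f x := by
  classical
  set t := s.image f with ht
  have hcard : s.card = t.card := (Finset.card_image_of_injOn hinj).symm
  have hcardc : sᶜ.card = tᶜ.card := by
    rw [Finset.card_compl, Finset.card_compl, hcard]
  let e₁ : {x // x ∈ s} ≃ {x // x ∈ t} := by
    apply Equiv.ofBijective (fun x => ⟨f x.1, Finset.mem_image_of_mem f x.2⟩)
    rw [Fintype.bijective_iff_injective_and_card]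
    constructor
    · rintro ⟨x, hx⟩ ⟨y, hy⟩ hxy
      simp only [Subtype.mk.injEq] at hxy ⊢
      exact hinj hx hy hxy
    · simp [hcard]
  let e₂ : {x // x ∈ sᶜ} ≃ {x // x ∈ tᶜ} := Finset.equivOfCardEq hcardc
  let e₂' : {x // ¬ x ∈ s} ≃ {x // ¬ x ∈ t} :=
    ((Equiv.subtypeEquivRight (fun x => by simp)).trans e₂).trans
      (Equiv.subtypeEquivRight (fun x => by simp))
  refine ⟨((Equiv.sumCompl (· ∈ s)).symm.trans ((e₁.sumCongr e₂').trans
      (Equiv.sumCompl (· ∈ t)))), fun x hx => ?_⟩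
  simp only [Equiv.trans_apply]
  rw [Equiv.sumCompl_symm_apply_of_pos (p := (· ∈ s)) hx]
  rfl

end Comb

section Asub
variable (F : Type*) [Field F] [CharZero F] (n k : ℕ)

/-- the bottom subalgebra, as a set -/
def Bs : Set (MonoidAlgebra F (Equiv.Perm (Fin (n + k)))) :=
  Set.range (MonoidAlgebra.mapDomainAlgHom F F
    (Equiv.Perm.viaEmbeddingHom (Fin.castLEEmb (Nat.le_add_right n k))))

/-- the generating set of the statement -/
def genSet : Set (MonoidAlgebra F (Equiv.Perm (Fin (n + k)))) :=
  ({a | a ∈ Bs F n k ∧ ∀ b ∈ Bs F n k, a * b = b * a} ∪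
    (MonoidAlgebra.of F (Equiv.Perm (Fin (n + k))) ''
      {g | ∀ i : Fin (n + k), (i : ℕ) < n → g i = i}) ∪
    {z | ∃ j : Fin k,
      z = ∑ i ∈ Finset.univ.filter (fun i : Fin (n + k) => (i : ℕ) < n + (j : ℕ)),
        MonoidAlgebra.of F (Equiv.Perm (Fin (n + k)))
          (Equiv.swap i ⟨n + (j : ℕ), Nat.add_lt_add_left j.isLt n⟩)})

/-- the target subalgebra -/
def Asub : Subalgebra F (MonoidAlgebra F (Equiv.Perm (Fin (n + k)))) :=
  Algebra.adjoin F (genSet F n k)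

variable {F n k}

lemma viaEmb_eq_oE :
    (Equiv.Perm.viaEmbeddingHom (Fin.castLEEmb (Nat.le_add_right n k)) :
      Equiv.Perm (Fin n) →* Equiv.Perm (Fin (n + k))) = oE n k := rfl

lemma mapDomainAlgHom_ofg (x : MonoidAlgebra F (Equiv.Perm (Fin n))) :
    (MonoidAlgebra.mapDomainAlgHom F F (oE n k)) x = MonoidAlgebra.mapDomain (oE n k) x := rfl

lemma ofg_oE_mem_Bs (π : Equiv.Perm (Fin n)) : ofg F n k (oE n k π) ∈ Bs F n k := by
  refine ⟨MonoidAlgebra.of F _ π, ?_⟩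
  rw [viaEmb_eq_oE, mapDomainAlgHom_ofg]
  exact MonoidAlgebra.mapDomain_single

/-- commuting with `B` is the same as `Inv` -/
lemma comm_iff_inv (a : MonoidAlgebra F (Equiv.Perm (Fin (n + k)))) :
    (∀ b ∈ Bs F n k, b * a = a * b) ↔ Inv a := by
  constructor
  · intro H π
    exact H _ (ofg_oE_mem_Bs π)
  · rintro H b ⟨x, rfl⟩
    rw [viaEmb_eq_oE, mapDomainAlgHom_ofg]
    induction x using MonoidAlgebra.induction_linear with
    | zero => simp
    | add f g hf hg => rw [MonoidAlgebra.mapDomain_add, add_mul, mul_add, hf, hg]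
    | single σ c =>
        rw [MonoidAlgebra.mapDomain_single]
        have h1 : (MonoidAlgebra.single (oE n k σ) c : MonoidAlgebra F (Equiv.Perm (Fin (n + k))))
            = c • ofg F n k (oE n k σ) := by
          rw [ofg_def]
          rw [MonoidAlgebra.smul_single, smul_eq_mul, mul_one]
        rw [h1, smul_mul_assoc, mul_smul_comm, H σ]

lemma central_mem_Asub {a : MonoidAlgebra F (Equiv.Perm (Fin (n + k)))}
    (ha : Inv a) (hB : a ∈ Bs F n k) : a ∈ Asub F n k := by
  apply Algebra.subset_adjoin
  left; left
  exact ⟨hB, fun b hb => ((comm_iff_inv a).2 ha b hb).symm⟩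

lemma top_perm_mem_Asub {g : Equiv.Perm (Fin (n + k))} (hg : ∀ x : Fin (n + k), (x:ℕ) < n → g x = x) :
    ofg F n k g ∈ Asub F n k := by
  apply Algebra.subset_adjoin
  left; right
  exact ⟨g, hg, rfl⟩

variable (F n) in
/-- the Jucys–Murphy generators -/
def XJ (j : Fin k) : MonoidAlgebra F (Equiv.Perm (Fin (n + k))) :=
  ∑ i ∈ Finset.univ.filter (fun i : Fin (n + k) => (i : ℕ) < n + (j : ℕ)),
    ofg F n k (Equiv.swap i ⟨n + (j : ℕ), Nat.add_lt_add_left j.isLt n⟩)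

lemma XJ_mem_Asub (j : Fin k) : XJ F n j ∈ Asub F n k := by
  apply Algebra.subset_adjoin
  right
  exact ⟨j, rfl⟩

lemma Esum_mem_Bs (c₀ : Equiv.Perm (Fin n)) : Esum F (oE n k c₀) ∈ Bs F n k := by
  refine ⟨∑ π : Equiv.Perm (Fin n), MonoidAlgebra.of F _ (π * c₀ * π⁻¹), ?_⟩
  rw [viaEmb_eq_oE, map_sum, Esum_def]
  refine Finset.sum_congr rfl fun π _ => ?_
  rw [mapDomainAlgHom_ofg, MonoidAlgebra.of_apply, MonoidAlgebra.mapDomain_single]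
  rw [ofg_def]
  congr 1
  simp [map_mul]

lemma inv_XJ (j : Fin k) : Inv (XJ F n j) := by
  intro σ
  set t : Fin (n + k) := ⟨n + (j : ℕ), Nat.add_lt_add_left j.isLt n⟩ with hts
  have htop : ¬ (t : ℕ) < n := by simp [hts]
  have hut : oE n k σ t = t := oE_apply_top σ htop
  set s : Finset (Fin (n + k)) := Finset.univ.filter (fun i => (i : ℕ) < n + (j : ℕ)) with hs
  have hmem : ∀ i ∈ s, oE n k σ i ∈ s := by
    intro i hi
    rw [hs, Finset.mem_filter] at hi ⊢
    refine ⟨Finset.mem_univ _, ?_⟩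
    by_cases hb : (i : ℕ) < n
    · have := oE_bot σ hb
      omega
    · rw [oE_apply_top σ hb]; exact hi.2
  have hmem' : ∀ i ∈ s, (oE n k σ)⁻¹ i ∈ s := by
    intro i hi
    rw [hs, Finset.mem_filter] at hi ⊢
    refine ⟨Finset.mem_univ _, ?_⟩
    by_cases hb : ((((oE n k σ)⁻¹ : Equiv.Perm (Fin (n+k))) i : Fin (n+k)) : ℕ) < n
    · omega
    · have : oE n k σ ((oE n k σ)⁻¹ i) = (oE n k σ)⁻¹ i := oE_apply_top σ hb
      rw [show ∀ (f : Equiv.Perm (Fin (n + k))) (x : Fin (n + k)), f (f⁻¹ x) = x from fun f x => by simp] at this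
      rw [this] at hi
      exact hi.2
  have key : ∀ i : Fin (n + k), oE n k σ * Equiv.swap i t
      = Equiv.swap (oE n k σ i) t * oE n k σ := by
    intro i
    have := Equiv.swap_apply_apply (oE n k σ) i t
    rw [hut] at this
    rw [this, mul_assoc, mul_assoc, inv_mul_cancel, mul_one]
  rw [XJ, Finset.mul_sum, Finset.sum_mul]
  rw [← hts, ← hs]
  calc ∑ i ∈ s, ofg F n k (oE n k σ) * ofg F n k (Equiv.swap i t)
      = ∑ i ∈ s, ofg F n k (Equiv.swap (oE n k σ i) t * oE n k σ) := by
        refine Finset.sum_congr rfl fun i _ => ?_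
        rw [← map_mul]
        · congr 1
          exact key i
    _ = ∑ i ∈ s, ofg F n k (Equiv.swap i t * oE n k σ) := by
        refine Finset.sum_nbij' (fun i => oE n k σ i) (fun i => (oE n k σ)⁻¹ i)
          (fun i hi => hmem i hi) (fun i hi => hmem' i hi) ?_ ?_ ?_
        · intro i _; simp
        · intro i _; simp
        · intro i _; rfl
    _ = ∑ i ∈ s, ofg F n k (Equiv.swap i t) * ofg F n k (oE n k σ) := by
        refine Finset.sum_congr rfl fun i _ => ?_
        rw [← map_mul]

/-- the key reduction lemma -/
lemma reduce (g : Equiv.Perm (Fin (n + k)))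
    (IH : ∀ h : Equiv.Perm (Fin (n + k)), (MB h).card < (MB g).card → Esum F h ∈ Asub F n k)
    (D : MonoidAlgebra F (Equiv.Perm (Fin (n + k))))
    (hDA : D ∈ Asub F n k) (hInv : Inv D) (hDg : D.coeff g ≠ 0)
    (hle : ∀ h, D.coeff h ≠ 0 → (MB h).card ≤ (MB g).card)
    (heq : ∀ h, D.coeff h ≠ 0 → (MB h).card = (MB g).card →
      ∃ π, h = oE n k π * g * (oE n k π)⁻¹) :
    Esum F g ∈ Asub F n k := by
  classical
  set c : F := D.coeff g * ((Esum F g).coeff g)⁻¹ with hc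
  have hc0 : c ≠ 0 := by
    apply mul_ne_zero hDg
    exact inv_ne_zero (Esum_self_ne_zero g)
  set D' : MonoidAlgebra F (Equiv.Perm (Fin (n + k))) := D - c • Esum F g with hD'
  have hInv' : Inv D' := hInv.sub ((inv_Esum g).smul c)
  -- every conjugate of g gives coefficient 0 in D'
  have hconj0 : ∀ π : Equiv.Perm (Fin n), D'.coeff (oE n k π * g * (oE n k π)⁻¹) = 0 := by
    intro π
    rw [hD', MonoidAlgebra.coeff_sub, Finsupp.sub_apply, MonoidAlgebra.coeff_smul_apply]
    rw [hInv.coeff π g, (inv_Esum g).coeff π g]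
    rw [hc, smul_eq_mul, mul_assoc, inv_mul_cancel₀ (Esum_self_ne_zero g), mul_one, sub_self]
  have hsupp : ∀ h ∈ D'.coeff.support, (MB h).card < (MB g).card := by
    intro h hh
    rw [Finsupp.mem_support_iff] at hh
    by_contra hlt
    push_neg at hlt
    -- h is in the support of D or of Esum g
    have hDor : D.coeff h ≠ 0 ∨ (Esum F g).coeff h ≠ 0 := by
      by_contra hor
      push_neg at hor
      apply hh
      rw [hD', MonoidAlgebra.coeff_sub, Finsupp.sub_apply, MonoidAlgebra.coeff_smul_apply, hor.1, hor.2, smul_zero, sub_zero]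
    have : ∃ π, h = oE n k π * g * (oE n k π)⁻¹ := by
      rcases hDor with h1 | h1
      · exact heq h h1 (le_antisymm (hle h h1) hlt)
      · obtain ⟨π, hπ⟩ := Esum_support h1
        exact ⟨π, hπ.symm⟩
    obtain ⟨π, rfl⟩ := this
    exact hh (hconj0 π)
  have hD'A : D' ∈ Asub F n k := by
    rw [hInv'.eq_avg]
    apply Subalgebra.smul_mem
    apply Subalgebra.sum_mem
    intro h hh
    exact Subalgebra.smul_mem _ (IH h (hsupp h hh)) _
  have : Esum F g = c⁻¹ • (D - D') := by
    rw [hD']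
    rw [sub_sub_cancel, smul_smul, inv_mul_cancel₀ hc0, one_smul]
  rw [this]
  exact Subalgebra.smul_mem _ (Subalgebra.sub_mem _ hDA hD'A) _

end Asub

section Main
variable {F : Type*} [Field F] [CharZero F] {n k : ℕ}

lemma oE_inv_bot_iff (π : Equiv.Perm (Fin n)) (x : Fin (n + k)) :
    (((oE n k π)⁻¹ x : ℕ) < n) ↔ (x : ℕ) < n := by
  have := oE_bot_iff π⁻¹ x
  rw [map_inv] at this
  exact this

lemma moved_conj_iff (π : Equiv.Perm (Fin n)) (u : Equiv.Perm (Fin (n + k))) (x : Fin (n + k)) :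
    (oE n k π * u * (oE n k π)⁻¹) x ≠ x ↔ u ((oE n k π)⁻¹ x) ≠ (oE n k π)⁻¹ x := by
  simp only [Equiv.Perm.mul_apply, ne_eq]
  constructor
  · intro hx hc
    apply hx
    rw [hc]
    simp
  · intro hx hc
    apply hx
    apply (oE n k π).injective
    rw [hc]
    simp

/-- the finset of top points -/
def topsF (n k : ℕ) : Finset (Fin (n + k)) := Finset.univ.filter (fun x => ¬ (x : ℕ) < n)

lemma caseA (g : Equiv.Perm (Fin (n + k)))
    (hA : ∃ x, g x ≠ x ∧ ∀ y, g.SameCycle x y → (y : ℕ) < n)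
    (IH : ∀ h : Equiv.Perm (Fin (n + k)), (MB h).card < (MB g).card → Esum F h ∈ Asub F n k) :
    Esum F g ∈ Asub F n k := by
  classical
  set P : Fin (n + k) → Prop := fun x => ∀ y, g.SameCycle x y → (y : ℕ) < n with hPdef
  have hPbot : ∀ x, P x → (x : ℕ) < n := fun x hx => hx x (Equiv.Perm.SameCycle.refl g x)
  have hPg : ∀ x, P x ↔ P (g x) := by
    intro x
    constructor
    · intro hx y hy
      exact hx y ((Equiv.Perm.sameCycle_apply_left).1 hy)
    · intro hx y hy
      exact hx y ((Equiv.Perm.sameCycle_apply_left).2 hy)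
  have hQg : ∀ x, (¬ P x) ↔ (¬ P (g x)) := fun x => not_congr (hPg x)
  set c : Equiv.Perm (Fin (n + k)) := Equiv.Perm.ofSubtype (g.subtypePerm (fun x => (hPg x).symm)) with hcdef
  set g₁ : Equiv.Perm (Fin (n + k)) := Equiv.Perm.ofSubtype (g.subtypePerm (p := fun x => ¬ P x) (fun x => (hQg x).symm)) with hg₁def
  have hcP : ∀ x, P x → c x = g x := by
    intro x hx
    rw [hcdef, Equiv.Perm.ofSubtype_apply_of_mem (g.subtypePerm (fun x => (hPg x).symm)) hx]
    rfl
  have hcN : ∀ x, ¬ P x → c x = x := by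
    intro x hx
    exact Equiv.Perm.ofSubtype_apply_of_not_mem (g.subtypePerm (fun x => (hPg x).symm)) hx
  have hg₁P : ∀ x, P x → g₁ x = x := by
    intro x hx
    exact Equiv.Perm.ofSubtype_apply_of_not_mem (g.subtypePerm (p := fun x => ¬ P x) (fun x => (hQg x).symm)) (not_not_intro hx)
  have hg₁N : ∀ x, ¬ P x → g₁ x = g x := by
    intro x hx
    rw [hg₁def, Equiv.Perm.ofSubtype_apply_of_mem (g.subtypePerm (p := fun x => ¬ P x) (fun x => (hQg x).symm)) hx]
    rfl
  have hsplit : g = c * g₁ := by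
    ext x
    rw [Equiv.Perm.mul_apply]
    by_cases hx : P x
    · rw [hg₁P x hx, hcP x hx]
    · rw [hg₁N x hx, hcN (g x) ((hQg x).1 hx)]
  have hmovc : ∀ x, c x ≠ x → P x ∧ g x ≠ x := by
    intro x hx
    by_cases h : P x
    · exact ⟨h, by rw [← hcP x h]; exact hx⟩
    · exact absurd (hcN x h) hx
  have hmovg₁ : ∀ x, g₁ x ≠ x → ¬ P x ∧ g x ≠ x := by
    intro x hx
    by_cases h : P x
    · exact absurd (hg₁P x h) hx
    · exact ⟨h, by rw [← hg₁N x h]; exact hx⟩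
  have hMBc : MB c = (MB g).filter P := by
    ext x
    simp only [mem_MB, Finset.mem_filter]
    constructor
    · rintro ⟨hb, hm⟩
      obtain ⟨h1, h2⟩ := hmovc x hm
      exact ⟨⟨hb, h2⟩, h1⟩
    · rintro ⟨⟨hb, hm⟩, hp⟩
      exact ⟨hb, by rw [hcP x hp]; exact hm⟩
  have hMBg₁ : MB g₁ = (MB g).filter (fun x => ¬ P x) := by
    ext x
    simp only [mem_MB, Finset.mem_filter]
    constructor
    · rintro ⟨hb, hm⟩
      obtain ⟨h1, h2⟩ := hmovg₁ x hm
      exact ⟨⟨hb, h2⟩, h1⟩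
    · rintro ⟨⟨hb, hm⟩, hp⟩
      exact ⟨hb, by rw [hg₁N x hp]; exact hm⟩
  have hcards : (MB c).card + (MB g₁).card = (MB g).card := by
    rw [hMBc, hMBg₁]
    exact Finset.card_filter_add_card_filter_not P
  have hcpos : 0 < (MB c).card := by
    obtain ⟨x₀, hm, hP₀⟩ := hA
    refine Finset.card_pos.2 ⟨x₀, ?_⟩
    rw [hMBc, Finset.mem_filter, mem_MB]
    exact ⟨⟨hPbot x₀ hP₀, hm⟩, hP₀⟩
  have hg₁lt : (MB g₁).card < (MB g).card := by omega
  have hcfix : ∀ x : Fin (n + k), ¬ (x : ℕ) < n → c x = x := by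
    intro x hx
    exact hcN x fun hP => hx (hPbot x hP)
  obtain ⟨c₀, hc₀⟩ := mem_range_oE hcfix
  have hEc : Esum F c ∈ Asub F n k := by
    refine central_mem_Asub (inv_Esum c) ?_
    rw [← hc₀]
    exact Esum_mem_Bs c₀
  -- the product element
  set D := Esum F c * Esum F g₁ with hDdef
  have hD : D = ∑ p ∈ (Finset.univ ×ˢ Finset.univ :
      Finset (Equiv.Perm (Fin n) × Equiv.Perm (Fin n))),
      ofg F n k ((oE n k p.1 * c * (oE n k p.1)⁻¹) * (oE n k p.2 * g₁ * (oE n k p.2)⁻¹)) := by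
    rw [hDdef, Esum_def, Esum_def]
    exact sum_ofg_mul_sum_ofg _ _ _ _
  apply reduce g IH D
  · exact Subalgebra.mul_mem _ hEc (IH g₁ hg₁lt)
  · exact (inv_Esum c).mul (inv_Esum g₁)
  · rw [hD]
    refine sum_ofg_ne_zero (Finset.univ ×ˢ Finset.univ) _
      (i := ((1 : Equiv.Perm (Fin n)), (1 : Equiv.Perm (Fin n))))
      (Finset.mem_product.2 ⟨Finset.mem_univ _, Finset.mem_univ _⟩) ?_
    simp [hsplit]
  · -- degree bound
    intro h hh
    rw [hD] at hh
    obtain ⟨⟨π, ρ⟩, -, rfl⟩ := sum_ofg_support _ _ _ hh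
    calc (MB _).card ≤ ((MB (oE n k π * c * (oE n k π)⁻¹)) ∪
          (MB (oE n k ρ * g₁ * (oE n k ρ)⁻¹))).card :=
          Finset.card_le_card (MB_mul_subset _ _)
      _ ≤ (MB (oE n k π * c * (oE n k π)⁻¹)).card
          + (MB (oE n k ρ * g₁ * (oE n k ρ)⁻¹)).card := Finset.card_union_le _ _
      _ = (MB c).card + (MB g₁).card := by rw [card_MB_conj, card_MB_conj]
      _ = (MB g).card := hcards
  · -- equality case: conjugate of g
    intro h hh hcard
    rw [hD] at hh
    obtain ⟨⟨π, ρ⟩, -, rfl⟩ := sum_ofg_support _ _ _ hh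
    set u₁ := oE n k π * c * (oE n k π)⁻¹ with hu₁
    set u₂ := oE n k ρ * g₁ * (oE n k ρ)⁻¹ with hu₂
    set A₁ := (MB c).image (oE n k π) with hA₁
    set A₂ := (MB g₁).image (oE n k ρ) with hA₂
    have hMBu₁ : MB u₁ = A₁ := MB_conj π c
    have hMBu₂ : MB u₂ = A₂ := MB_conj ρ g₁
    have hsub : MB (u₁ * u₂) ⊆ A₁ ∪ A₂ := by
      rw [← hMBu₁, ← hMBu₂]
      exact MB_mul_subset _ _
    have hcardA₁ : A₁.card = (MB c).card :=
      Finset.card_image_of_injective _ (oE n k π).injective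
    have hcardA₂ : A₂.card = (MB g₁).card :=
      Finset.card_image_of_injective _ (oE n k ρ).injective
    have hinter : A₁ ∩ A₂ = ∅ := by
      have h1 : (MB g).card ≤ (A₁ ∪ A₂).card := hcard ▸ Finset.card_le_card hsub
      have h2 := Finset.card_union_add_card_inter A₁ A₂
      have h3 : (A₁ ∪ A₂).card ≤ (MB g).card := by
        calc (A₁ ∪ A₂).card ≤ A₁.card + A₂.card := Finset.card_union_le _ _
          _ = (MB g).card := by rw [hcardA₁, hcardA₂]; exact hcards
      have h4 : (A₁ ∩ A₂).card = 0 := by omega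
      exact Finset.card_eq_zero.1 h4
    have hdisj : ∀ x, x ∈ A₁ → x ∉ A₂ := by
      intro x h1 h2
      have : x ∈ A₁ ∩ A₂ := Finset.mem_inter.2 ⟨h1, h2⟩
      rw [hinter] at this
      exact absurd this (Finset.notMem_empty x)
    -- bottomness of A₁ and A₁''
    set A₁'' := (MB c).image (oE n k ρ) with hA₁''
    have hA₁bot : ∀ x ∈ A₁, (x : ℕ) < n := by
      intro x hx
      rw [hA₁, Finset.mem_image] at hx
      obtain ⟨y, hy, rfl⟩ := hx
      exact oE_bot π (mem_MB.1 hy).1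
    have hA₁''bot : ∀ x ∈ A₁'', (x : ℕ) < n := by
      intro x hx
      rw [hA₁'', Finset.mem_image] at hx
      obtain ⟨y, hy, rfl⟩ := hx
      exact oE_bot ρ (mem_MB.1 hy).1
    have hA₁''A₂ : ∀ x, x ∈ A₁'' → x ∉ A₂ := by
      intro x h1 h2
      rw [hA₁'', Finset.mem_image] at h1
      rw [hA₂, Finset.mem_image] at h2
      obtain ⟨y, hy, rfl⟩ := h1
      obtain ⟨z, hz, hzy⟩ := h2
      have : z = y := (oE n k ρ).injective hzy
      subst this
      rw [hMBc, Finset.mem_filter] at hy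
      rw [hMBg₁, Finset.mem_filter] at hz
      exact hz.2 hy.2
    set δ := oE n k π * (oE n k ρ)⁻¹ with hδ
    have hδim : ∀ x ∈ A₁'', δ x ∈ A₁ := by
      intro x hx
      rw [hA₁'', Finset.mem_image] at hx
      obtain ⟨y, hy, rfl⟩ := hx
      rw [hA₁, Finset.mem_image]
      refine ⟨y, hy, ?_⟩
      rw [hδ]
      simp
    set f : Fin (n + k) → Fin (n + k) := fun x => if x ∈ A₁'' then δ x else x with hf
    set s : Finset (Fin (n + k)) := A₁'' ∪ (A₂ ∪ topsF n k) with hs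
    have hinj : Set.InjOn f s := by
      intro x hx y hy hxy
      rw [hf] at hxy
      simp only at hxy
      by_cases h1 : x ∈ A₁'' <;> by_cases h2 : y ∈ A₁''
      · rw [if_pos h1, if_pos h2] at hxy
        exact δ.injective hxy
      · rw [if_pos h1, if_neg h2] at hxy
        exfalso
        have hy' : y ∈ A₂ ∪ topsF n k := by
          rcases Finset.mem_union.1 hy with h | h
          · exact absurd h h2
          · exact h
        have hd : δ x ∈ A₁ := hδim x h1
        rcases Finset.mem_union.1 hy' with h | h
        · exact hdisj (δ x) hd (hxy ▸ h)
        · rw [topsF, Finset.mem_filter] at h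
          exact h.2 (hxy ▸ hA₁bot (δ x) hd)
      · rw [if_neg h1, if_pos h2] at hxy
        exfalso
        have hx' : x ∈ A₂ ∪ topsF n k := by
          rcases Finset.mem_union.1 hx with h | h
          · exact absurd h h1
          · exact h
        have hd : δ y ∈ A₁ := hδim y h2
        rcases Finset.mem_union.1 hx' with h | h
        · exact hdisj (δ y) hd (hxy ▸ h)
        · rw [topsF, Finset.mem_filter] at h
          exact h.2 (hxy ▸ hA₁bot (δ y) hd)
      · rw [if_neg h1, if_neg h2] at hxy
        exact hxy
    obtain ⟨π', hπ'⟩ := exists_perm_extend s f hinj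
    have hπ'A₁'' : ∀ x ∈ A₁'', π' x = δ x := by
      intro x hx
      rw [hπ' x (Finset.mem_union_left _ hx), hf]
      simp only [if_pos hx]
    have hπ'fix : ∀ x, x ∈ A₂ ∪ topsF n k → π' x = x := by
      intro x hx
      have hnx : x ∉ A₁'' := by
        rcases Finset.mem_union.1 hx with h | h
        · exact fun hc => hA₁''A₂ x hc h
        · rw [topsF, Finset.mem_filter] at h
          exact fun hc => h.2 (hA₁''bot x hc)
      rw [hπ' x (Finset.mem_union_right _ hx), hf]
      simp only [if_neg hnx]
    have hπ'top : ∀ x : Fin (n + k), ¬ (x : ℕ) < n → π' x = x := by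
      intro x hx
      exact hπ'fix x (Finset.mem_union_right _ (by rw [topsF, Finset.mem_filter]; exact ⟨Finset.mem_univ _, hx⟩))
    set τ := π' * oE n k ρ with hτ
    have hτtop : ∀ x : Fin (n + k), ¬ (x : ℕ) < n → τ x = x := by
      intro x hx
      rw [hτ, Equiv.Perm.mul_apply, oE_apply_top ρ hx, hπ'top x hx]
    obtain ⟨π₀, hπ₀⟩ := mem_range_oE hτtop
    refine ⟨π₀, ?_⟩
    rw [hπ₀]
    -- now show u₁ * u₂ = τ * g * τ⁻¹
    set c'' := oE n k ρ * c * (oE n k ρ)⁻¹ with hc''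
    have hmovc'' : ∀ x, c'' x ≠ x → x ∈ A₁'' := by
      intro x hx
      rw [hc'', moved_conj_iff] at hx
      rw [hA₁'', Finset.mem_image]
      refine ⟨(oE n k ρ)⁻¹ x, ?_, by simp⟩
      rw [mem_MB]
      refine ⟨?_, hx⟩
      exact hPbot _ (hmovc _ hx).1
    have hstep1 : (δ⁻¹ * π') * c'' * (δ⁻¹ * π')⁻¹ = c'' := by
      apply conj_eq_self_of_fixes
      intro x hx
      have hxa := hmovc'' x hx
      rw [Equiv.Perm.mul_apply, hπ'A₁'' x hxa]
      simp
    have hstep1' : π' * c'' * π'⁻¹ = δ * c'' * δ⁻¹ := by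
      calc π' * c'' * π'⁻¹ = δ * ((δ⁻¹ * π') * c'' * (δ⁻¹ * π')⁻¹) * δ⁻¹ := by group
        _ = δ * c'' * δ⁻¹ := by rw [hstep1]
    have hδc'' : δ * c'' * δ⁻¹ = u₁ := by
      rw [hδ, hc'', hu₁]
      group
    have hmovu₂' : ∀ x, u₂ x ≠ x → x ∈ A₂ ∪ topsF n k := by
      intro x hx
      by_cases hb : (x : ℕ) < n
      · refine Finset.mem_union_left _ ?_
        rw [← hMBu₂, mem_MB]
        exact ⟨hb, hx⟩
      · exact Finset.mem_union_right _ (by rw [topsF, Finset.mem_filter]; exact ⟨Finset.mem_univ _, hb⟩)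
    have hstep2 : π' * u₂ * π'⁻¹ = u₂ := by
      apply conj_eq_self_of_fixes
      intro x hx
      exact hπ'fix x (hmovu₂' x hx)
    have hgoal : τ * g * τ⁻¹ = u₁ * u₂ := by
      rw [hsplit, hτ]
      calc (π' * oE n k ρ) * (c * g₁) * (π' * oE n k ρ)⁻¹
          = (π' * c'' * π'⁻¹) * (π' * (oE n k ρ * g₁ * (oE n k ρ)⁻¹) * π'⁻¹) := by
            rw [hc'']; group
        _ = u₁ * u₂ := by rw [hstep1', hδc'', ← hu₂, hstep2]
    rw [← hgoal]

end Main

section MainB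
variable {F : Type*} [Field F] [CharZero F] {n k : ℕ}

lemma caseB (g : Equiv.Perm (Fin (n + k)))
    (hB : ¬ ∃ x, g x ≠ x ∧ ∀ y, g.SameCycle x y → (y : ℕ) < n)
    (hpos : 0 < (MB g).card)
    (IH : ∀ h : Equiv.Perm (Fin (n + k)), (MB h).card < (MB g).card → Esum F h ∈ Asub F n k) :
    Esum F g ∈ Asub F n k := by
  classical
  -- find a bottom point sent to a top point
  have hexists : ∃ i : Fin (n + k), (i : ℕ) < n ∧ ¬ ((g i : ℕ) < n) := by
    by_contra hno
    push_neg at hno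
    -- bottoms invariant under g and g⁻¹
    set bots : Finset (Fin (n + k)) := Finset.univ.filter (fun x => (x : ℕ) < n) with hbots
    have hmem_bots : ∀ x, x ∈ bots ↔ (x : ℕ) < n := by
      intro x; rw [hbots, Finset.mem_filter]; simp
    have himg : bots.image g = bots := by
      apply Finset.eq_of_subset_of_card_le
      · intro x hx
        rw [Finset.mem_image] at hx
        obtain ⟨y, hy, rfl⟩ := hx
        rw [hmem_bots] at *
        exact hno y hy
      · rw [Finset.card_image_of_injective _ g.injective]
    have hinv : ∀ x : Fin (n + k), (x : ℕ) < n → ((g⁻¹ x : ℕ) < n) := by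
      intro x hx
      have : x ∈ bots.image g := by rw [himg, hmem_bots]; exact hx
      rw [Finset.mem_image] at this
      obtain ⟨y, hy, hyx⟩ := this
      rw [hmem_bots] at hy
      have : g⁻¹ x = y := by rw [← hyx]; simp
      rw [this]; exact hy
    have hzpow : ∀ s : ℤ, ∀ x : Fin (n + k), (x : ℕ) < n → (((g ^ s) x : ℕ) < n) := by
      intro s
      induction s using Int.induction_on with
      | zero => intro x hx; simpa using hx
      | succ s ih =>
          intro x hx
          have : g ^ ((s : ℤ) + 1) = g ^ (s : ℤ) * g := zpow_add_one g s
          rw [this, Equiv.Perm.mul_apply]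
          exact ih _ (hno x hx)
      | pred s ih =>
          intro x hx
          have : g ^ (-(s : ℤ) - 1) = g ^ (-(s : ℤ)) * g⁻¹ := zpow_sub_one g _
          rw [this, Equiv.Perm.mul_apply]
          exact ih _ (hinv x hx)
    -- pick a moved bottom point
    obtain ⟨x₀, hx₀⟩ := Finset.card_pos.1 hpos
    rw [mem_MB] at hx₀
    push_neg at hB
    obtain ⟨y, hsc, hy⟩ := hB x₀ hx₀.2
    obtain ⟨s, hs⟩ := hsc
    have := hzpow s x₀ hx₀.1
    rw [hs] at this
    omega
  obtain ⟨i, hiB, hit⟩ := hexists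
  have hginot : g i ≠ i := fun hc => hit (by rw [hc]; exact hiB)
  have hiMB : i ∈ MB g := mem_MB.2 ⟨hiB, hginot⟩
  -- the top point t = g i, expressed in the canonical form
  have hjlt : ((g i : ℕ) - n) < k := by
    have := (g i).isLt
    omega
  set j : Fin k := ⟨(g i : ℕ) - n, hjlt⟩ with hj
  set t : Fin (n + k) := ⟨n + (j : ℕ), Nat.add_lt_add_left j.isLt n⟩ with ht
  have htop : ¬ (t : ℕ) < n := by rw [ht]; simp
  have hti : t = g i := by
    rw [ht, hj]
    apply Fin.ext
    simp only
    omega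
  have hit' : i ≠ t := fun hc => htop (hc ▸ hiB)
  set g' := Equiv.swap i t * g with hg'
  have hg'i : g' i = i := by
    rw [hg', Equiv.Perm.mul_apply, ← hti, Equiv.swap_apply_right]
  have hsplit : g = Equiv.swap i t * g' := by
    rw [hg', ← mul_assoc, Equiv.swap_mul_self, one_mul]
  have hMBg' : MB g' ⊆ (MB g).erase i := by
    intro x hx
    rw [mem_MB] at hx
    obtain ⟨hb, hm⟩ := hx
    have hxi : x ≠ i := fun hc => hm (hc ▸ hg'i)
    have hxt : x ≠ t := fun hc => htop (hc ▸ hb)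
    rw [Finset.mem_erase, mem_MB]
    refine ⟨hxi, hb, ?_⟩
    intro hc
    apply hm
    rw [hg', Equiv.Perm.mul_apply, hc, Equiv.swap_apply_of_ne_of_ne hxi hxt]
  have hlt : (MB g').card < (MB g).card := by
    have h1 : (MB g').card ≤ ((MB g).erase i).card := Finset.card_le_card hMBg'
    rw [Finset.card_erase_of_mem hiMB] at h1
    omega
  -- D = X_t * E(g')
  set D := XJ F n j * Esum F g' with hDdef
  have hXJ : XJ F n j = ∑ a ∈ Finset.univ.filter (fun a : Fin (n + k) => (a : ℕ) < n + (j : ℕ)),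
      ofg F n k (Equiv.swap a t) := rfl
  have hD : D = ∑ p ∈ (Finset.univ.filter (fun a : Fin (n + k) => (a : ℕ) < n + (j : ℕ))) ×ˢ
      (Finset.univ : Finset (Equiv.Perm (Fin n))),
      ofg F n k (Equiv.swap p.1 t * (oE n k p.2 * g' * (oE n k p.2)⁻¹)) := by
    rw [hDdef, hXJ, Esum_def]
    exact sum_ofg_mul_sum_ofg _ _ _ _
  have hiJ : i ∈ Finset.univ.filter (fun a : Fin (n + k) => (a : ℕ) < n + (j : ℕ)) := by
    rw [Finset.mem_filter]
    exact ⟨Finset.mem_univ _, by omega⟩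
  apply reduce g IH D
  · exact Subalgebra.mul_mem _ (XJ_mem_Asub j) (IH g' hlt)
  · exact (inv_XJ j).mul (inv_Esum g')
  · rw [hD]
    refine sum_ofg_ne_zero _ _ (i := (i, (1 : Equiv.Perm (Fin n))))
      (Finset.mem_product.2 ⟨hiJ, Finset.mem_univ _⟩) ?_
    simp only [map_one, one_mul, inv_one, mul_one]
    exact hsplit.symm
  · -- degree bound
    intro h hh
    rw [hD] at hh
    obtain ⟨⟨a, π⟩, -, rfl⟩ := sum_ofg_support _ _ _ hh
    show (MB (Equiv.swap a t * (oE n k π * g' * (oE n k π)⁻¹))).card ≤ (MB g).card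
    have hswap : MB (Equiv.swap a t) ⊆ {a} := by
      intro x hx
      rw [mem_MB] at hx
      obtain ⟨hb, hm⟩ := hx
      have hxt : x ≠ t := fun hc => htop (hc ▸ hb)
      rw [Finset.mem_singleton]
      by_contra hxa
      exact hm (Equiv.swap_apply_of_ne_of_ne hxa hxt)
    have c1 : (MB (Equiv.swap a t)).card ≤ 1 := by
      calc (MB (Equiv.swap a t)).card ≤ ({a} : Finset _).card := Finset.card_le_card hswap
        _ = 1 := Finset.card_singleton a
    calc (MB _).card
        ≤ ((MB (Equiv.swap a t)) ∪ (MB (oE n k π * g' * (oE n k π)⁻¹))).card :=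
          Finset.card_le_card (MB_mul_subset _ _)
      _ ≤ (MB (Equiv.swap a t)).card + (MB (oE n k π * g' * (oE n k π)⁻¹)).card :=
          Finset.card_union_le _ _
      _ = (MB (Equiv.swap a t)).card + (MB g').card := by rw [card_MB_conj]
      _ ≤ 1 + (MB g').card := by omega
      _ ≤ (MB g).card := by omega
  · -- equality case
    intro h hh hcard
    rw [hD] at hh
    obtain ⟨⟨a, π⟩, -, rfl⟩ := sum_ofg_support _ _ _ hh
    have hcard' : (MB (Equiv.swap a t * (oE n k π * g' * (oE n k π)⁻¹))).card = (MB g).card := hcard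
    clear hcard
    show ∃ π₀ : Equiv.Perm (Fin n), Equiv.swap a t * (oE n k π * g' * (oE n k π)⁻¹)
      = oE n k π₀ * g * (oE n k π₀)⁻¹
    set u₂ := oE n k π * g' * (oE n k π)⁻¹ with hu₂
    set A₂ := (MB g').image (oE n k π) with hA₂
    have hMBu₂ : MB u₂ = A₂ := MB_conj π g'
    have hcardA₂ : A₂.card = (MB g').card :=
      Finset.card_image_of_injective _ (oE n k π).injective
    have hsubswap : MB (Equiv.swap a t) ⊆ {a} := by
      intro x hx
      rw [mem_MB] at hx
      obtain ⟨hb, hm⟩ := hx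
      have hxt : x ≠ t := fun hc => htop (hc ▸ hb)
      rw [Finset.mem_singleton]
      by_contra hxa
      exact hm (Equiv.swap_apply_of_ne_of_ne hxa hxt)
    have hsub : MB (Equiv.swap a t * u₂) ⊆ insert a A₂ := by
      intro x hx
      rcases Finset.mem_union.1 (MB_mul_subset _ _ hx) with h1 | h1
      · exact Finset.mem_insert.2 (Or.inl (Finset.mem_singleton.1 (hsubswap h1)))
      · rw [hMBu₂] at h1
        exact Finset.mem_insert.2 (Or.inr h1)
    have hanotA₂ : a ∉ A₂ := by
      intro hc
      have : insert a A₂ = A₂ := Finset.insert_eq_self.2 hc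
      rw [this] at hsub
      have h5 := Finset.card_le_card hsub
      rw [hcard'] at h5
      omega
    have habot : (a : ℕ) < n := by
      by_contra hab
      -- then swap a t moves no bottom point
      have : MB (Equiv.swap a t * u₂) ⊆ A₂ := by
        intro x hx
        rcases Finset.mem_union.1 (MB_mul_subset _ _ hx) with h1 | h1
        · exfalso
          have := Finset.mem_singleton.1 (hsubswap h1)
          rw [mem_MB] at h1
          exact hab (this ▸ h1.1)
        · rw [hMBu₂] at h1; exact h1
      have h5 := Finset.card_le_card this
      rw [hcard'] at h5
      omega
    -- construct the conjugator
    set i' := oE n k π i with hi'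
    have hi'bot : (i' : ℕ) < n := oE_bot π hiB
    have hi'notA₂ : i' ∉ A₂ := by
      intro hc
      rw [hA₂, Finset.mem_image] at hc
      obtain ⟨y, hy, hyi⟩ := hc
      have : y = i := (oE n k π).injective hyi
      subst this
      rw [mem_MB] at hy
      exact hy.2 hg'i
    set f : Fin (n + k) → Fin (n + k) := fun x => if x = i' then a else x with hf
    set s : Finset (Fin (n + k)) := insert i' (A₂ ∪ topsF n k) with hs
    have hanotAT : a ∉ A₂ ∪ topsF n k := by
      intro hc
      rcases Finset.mem_union.1 hc with h1 | h1
      · exact hanotA₂ h1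
      · rw [topsF, Finset.mem_filter] at h1
        exact h1.2 habot
    have hi'notAT : i' ∉ A₂ ∪ topsF n k := by
      intro hc
      rcases Finset.mem_union.1 hc with h1 | h1
      · exact hi'notA₂ h1
      · rw [topsF, Finset.mem_filter] at h1
        exact h1.2 hi'bot
    have hinj : Set.InjOn f s := by
      intro x hx y hy hxy
      rw [hf] at hxy
      simp only at hxy
      by_cases h1 : x = i' <;> by_cases h2 : y = i'
      · rw [h1, h2]
      · rw [if_pos h1, if_neg h2] at hxy
        exfalso
        have : y ∈ A₂ ∪ topsF n k := by
          rcases Finset.mem_insert.1 hy with h | h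
          · exact absurd h h2
          · exact h
        rw [← hxy] at this
        exact hanotAT this
      · rw [if_neg h1, if_pos h2] at hxy
        exfalso
        have : x ∈ A₂ ∪ topsF n k := by
          rcases Finset.mem_insert.1 hx with h | h
          · exact absurd h h1
          · exact h
        rw [hxy] at this
        exact hanotAT this
      · rw [if_neg h1, if_neg h2] at hxy
        exact hxy
    obtain ⟨π', hπ'⟩ := exists_perm_extend s f hinj
    have hπ'i' : π' i' = a := by
      rw [hπ' i' (Finset.mem_insert_self _ _), hf]
      simp
    have hπ'fix : ∀ x, x ∈ A₂ ∪ topsF n k → π' x = x := by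
      intro x hx
      have hxi' : x ≠ i' := fun hc => hi'notAT (hc ▸ hx)
      rw [hπ' x (Finset.mem_insert.2 (Or.inr hx)), hf]
      simp only [if_neg hxi']
    have hπ'top : ∀ x : Fin (n + k), ¬ (x : ℕ) < n → π' x = x := by
      intro x hx
      exact hπ'fix x (Finset.mem_union_right _
        (by rw [topsF, Finset.mem_filter]; exact ⟨Finset.mem_univ _, hx⟩))
    set τ := π' * oE n k π with hτ
    have hτtop : ∀ x : Fin (n + k), ¬ (x : ℕ) < n → τ x = x := by
      intro x hx
      rw [hτ, Equiv.Perm.mul_apply, oE_apply_top π hx, hπ'top x hx]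
    obtain ⟨π₀, hπ₀⟩ := mem_range_oE hτtop
    refine ⟨π₀, ?_⟩
    rw [hπ₀]
    -- show swap a t * u₂ = τ * g * τ⁻¹
    have hτi : τ i = a := by
      rw [hτ, Equiv.Perm.mul_apply, ← hi', hπ'i']
    have hτt : τ t = t := hτtop t htop
    have hswapconj : τ * Equiv.swap i t * τ⁻¹ = Equiv.swap a t := by
      have := Equiv.swap_apply_apply τ i t
      rw [hτi, hτt] at this
      exact this.symm
    have hmovu₂ : ∀ x, u₂ x ≠ x → x ∈ A₂ ∪ topsF n k := by
      intro x hx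
      by_cases hb : (x : ℕ) < n
      · exact Finset.mem_union_left _ (by rw [← hMBu₂, mem_MB]; exact ⟨hb, hx⟩)
      · exact Finset.mem_union_right _
          (by rw [topsF, Finset.mem_filter]; exact ⟨Finset.mem_univ _, hb⟩)
    have hstep2 : π' * u₂ * π'⁻¹ = u₂ := by
      apply conj_eq_self_of_fixes
      intro x hx
      exact hπ'fix x (hmovu₂ x hx)
    have hgoal : τ * g * τ⁻¹ = Equiv.swap a t * u₂ := by
      rw [hsplit]
      calc τ * (Equiv.swap i t * g') * τ⁻¹
          = (τ * Equiv.swap i t * τ⁻¹) * (π' * (oE n k π * g' * (oE n k π)⁻¹) * π'⁻¹) := by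
            rw [hτ]; group
        _ = Equiv.swap a t * u₂ := by rw [hswapconj, ← hu₂, hstep2]
    rw [← hgoal]

end MainB

section Finale
variable {F : Type*} [Field F] [CharZero F] {n k : ℕ}

lemma case0 (g : Equiv.Perm (Fin (n + k))) (h0 : (MB g).card = 0) :
    Esum F g ∈ Asub F n k := by
  have hfix : ∀ x : Fin (n + k), (x : ℕ) < n → g x = x := by
    intro x hx
    by_contra hm
    have hmem : x ∈ MB g := mem_MB.2 ⟨hx, hm⟩
    rw [Finset.card_eq_zero] at h0
    rw [h0] at hmem
    exact Finset.notMem_empty x hmem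
  have hconj : ∀ π : Equiv.Perm (Fin n), oE n k π * g * (oE n k π)⁻¹ = g := by
    intro π
    apply conj_eq_self_of_fixes
    intro x hxm
    apply oE_apply_top
    intro hb
    exact hxm (hfix x hb)
  rw [Esum_def]
  apply Subalgebra.sum_mem
  intro π _
  rw [hconj π]
  exact top_perm_mem_Asub hfix

lemma Esum_mem_Asub (g : Equiv.Perm (Fin (n + k))) : Esum F g ∈ Asub F n k := by
  suffices H : ∀ N : ℕ, ∀ g : Equiv.Perm (Fin (n + k)),
      (MB g).card ≤ N → Esum F g ∈ Asub F n k from H _ g le_rfl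
  intro N
  induction N with
  | zero => exact fun g hg => case0 g (Nat.le_zero.1 hg)
  | succ N ihN =>
      intro g hg
      by_cases hle : (MB g).card ≤ N
      · exact ihN g hle
      · have hpos : 0 < (MB g).card := by omega
        have IH : ∀ h : Equiv.Perm (Fin (n + k)),
            (MB h).card < (MB g).card → Esum F h ∈ Asub F n k :=
          fun h hh => ihN h (by omega)
        by_cases hA : ∃ x, g x ≠ x ∧ ∀ y, g.SameCycle x y → (y : ℕ) < n
        · exact caseA g hA IH
        · exact caseB g hA hpos IH

theorem main (F : Type*) [Field F] [CharZero F] (n k : ℕ) :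
    Subalgebra.centralizer F (Bs F n k) = Asub F n k := by
  apply le_antisymm
  · intro a ha
    rw [Subalgebra.mem_centralizer_iff] at ha
    have hInv : Inv a := (comm_iff_inv a).1 ha
    rw [hInv.eq_avg]
    apply Subalgebra.smul_mem
    apply Subalgebra.sum_mem
    intro h _
    exact Subalgebra.smul_mem _ (Esum_mem_Asub h) _
  · rw [Asub]
    apply Algebra.adjoin_le
    intro a ha
    rw [SetLike.mem_coe, Subalgebra.mem_centralizer_iff]
    rcases ha with (⟨haB, hcomm⟩ | ⟨g, hgfix, rfl⟩) | ⟨j, rfl⟩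
    · exact fun b hb => (hcomm b hb).symm
    · refine (comm_iff_inv _).2 ?_
      intro π
      have hd : (oE n k π).Disjoint g := by
        intro x
        by_cases hb : (x : ℕ) < n
        · exact Or.inr (hgfix x hb)
        · exact Or.inl (oE_apply_top π hb)
      have : ofg F n k (oE n k π) * ofg F n k g = ofg F n k g * ofg F n k (oE n k π) := by
        rw [← map_mul, ← map_mul, hd.commute.eq]
      exact this
    · exact (comm_iff_inv _).2 (inv_XJ j)

end Finale

end Olsh
end

/-- Olshanski's centralizer theorem (the level-one case of Corollary 8.3): in `F[S_{n+k}]`,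
the centralizer of the image `B` of `F[S_n]` equals the subalgebra generated by the center
of `B`, the permutations fixing `{1, …, n}` pointwise, and the Jucys–Murphy elements
`X_{n+j} = ∑_{i=1}^{n+j-1} (i, n+j)`, `j = 1, …, k`. -/
theorem stmt14 (F : Type*) [Field F] [CharZero F] (n k : ℕ)
    (B : Set (MonoidAlgebra F (Equiv.Perm (Fin (n + k)))))
    (hB : B = Set.range (MonoidAlgebra.mapDomainAlgHom F F
        (Equiv.Perm.viaEmbeddingHom (Fin.castLEEmb (Nat.le_add_right n k))))) :
    Subalgebra.centralizer F B =
      Algebra.adjoin F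
        ({a | a ∈ B ∧ ∀ b ∈ B, a * b = b * a} ∪
          (MonoidAlgebra.of F (Equiv.Perm (Fin (n + k))) ''
            {g | ∀ i : Fin (n + k), (i : ℕ) < n → g i = i}) ∪
          {z | ∃ j : Fin k,
            z = ∑ i ∈ Finset.univ.filter (fun i : Fin (n + k) => (i : ℕ) < n + (j : ℕ)),
              MonoidAlgebra.of F (Equiv.Perm (Fin (n + k)))
                (Equiv.swap i ⟨n + (j : ℕ), Nat.add_lt_add_left j.isLt n⟩)}) := by
  subst hB
  exact Olsh.main F n k
end
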